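/- arXiv:1510.08781 — 2 statements merged into one kernel-verified Lean document; each statement's English description precedes it below -/
import Mathlib

section
/- Let x be an infinite set of natural numbers and let U be a nonempty open subset of [x]^ω (in the subspace topology from Cantor space). Then there is a nonempty perfect set P ⊆ U such that for all distinct y, z ∈ P the measures μ^y and μ^z are mutually singular. -/
open MeasureTheory Filter Set
open scoped ENNReal

noncomputable section

/-- `fEnum x` is the increasing enumeration `f_x : ω → ω` of the set `x ∈ [ω]^ω`. -/
def fEnum (x : Set ℕ) : ℕ → ℕ := Nat.nth (· ∈ x)

/-- The sequence `α^x ∈ [1/4,3/4]^ω` attached to `x ∈ [ω]^ω`: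
`α^x_n = 1/4 + 1/(2·√(f_x⁻¹(n)+1))` if `n ∈ x` and `α^x_n = 1/4` otherwise
(for `n ∈ x`, `f_x⁻¹(n)` is the number of elements of `x` below `n`). -/
noncomputable def alphaSeq (x : Set ℕ) (n : ℕ) : ℝ :=
  haveI := Classical.decPred (· ∈ x)
  if n ∈ x then 1/4 + 1/(2 * Real.sqrt ((Nat.count (· ∈ x) n : ℝ) + 1)) else 1/4

/-- `ρ(x,y) = Σ_n (α^x_n - α^y_n)² ∈ [0,∞]`. -/
noncomputable def rho (x y : Set ℕ) : ℝ≥0∞ :=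
  ∑' n : ℕ, ENNReal.ofReal ((alphaSeq x n - alphaSeq y n)^2)

/-- `F = {g ∈ [ω]^ω : ρ(g,ω) < ∞}`. -/
def Fset : Set (Set ℕ) := {g | g.Infinite ∧ rho g Set.univ < ⊤}

/-- The monoid operation `x · y = (f_y ∘ f_x)[ω]`. -/
def dotOp (x y : Set ℕ) : Set ℕ := Set.range (fEnum y ∘ fEnum x)

/-- `IsKakutaniProduct x μ` says that `μ` is the product measure
`μ^x = ∏_n (α^x_n δ_0 + (1 - α^x_n) δ_1)` on Cantor space `2^ω = ℕ → Bool`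
(identifying `0` with `false` and `1` with `true`), i.e. `μ` is the Borel
probability measure giving each finite cylinder the corresponding product of
the coordinate weights.  These conditions determine `μ^x` uniquely. -/
def IsKakutaniProduct (x : Set ℕ) (μ : Measure (ℕ → Bool)) : Prop :=
  IsProbabilityMeasure μ ∧
    ∀ (s : Finset ℕ) (f : ℕ → Bool),
      μ {g | ∀ n ∈ s, g n = f n} =
        ∏ n ∈ s, (if f n = false then ENNReal.ofReal (alphaSeq x n)
                  else ENNReal.ofReal (1 - alphaSeq x n))

/-- The subset of `ℕ` coded by a point of Cantor space. -/
def toSet (f : ℕ → Bool) : Set ℕ := {n | f n = true}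

/-- count with a fixed classical instance -/
def cnt (Y : Set ℕ) (n : ℕ) : ℕ := @Nat.count (· ∈ Y) (Classical.decPred _) n

lemma alphaSeq_of_mem {x : Set ℕ} {n : ℕ} (h : n ∈ x) :
    alphaSeq x n = 1/4 + 1/(2 * Real.sqrt ((cnt x n : ℝ) + 1)) := by
  haveI := Classical.decPred (· ∈ x)
  unfold alphaSeq
  rw [if_pos h]
  rfl

lemma alphaSeq_of_not_mem {x : Set ℕ} {n : ℕ} (h : n ∉ x) : alphaSeq x n = 1/4 := by
  haveI := Classical.decPred (· ∈ x)
  unfold alphaSeq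
  rw [if_neg h]

lemma sqrt_term_bounds (c : ℝ) (hc : 0 ≤ c) :
    0 < 1/(2 * Real.sqrt (c+1)) ∧ 1/(2 * Real.sqrt (c+1)) ≤ 1/2 := by
  have h1 : (1:ℝ) ≤ Real.sqrt (c + 1) := by
    have := Real.sqrt_le_sqrt (show (1:ℝ) ≤ c + 1 by linarith)
    rwa [Real.sqrt_one] at this
  constructor
  · positivity
  · rw [one_div, one_div]
    exact inv_anti₀ (by norm_num) (by linarith)

lemma alphaSeq_ge (x : Set ℕ) (n : ℕ) : 1/4 ≤ alphaSeq x n := by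
  by_cases h : n ∈ x
  · rw [alphaSeq_of_mem h]
    have := (sqrt_term_bounds (cnt x n : ℝ) (by positivity)).1
    linarith
  · rw [alphaSeq_of_not_mem h]

lemma alphaSeq_le (x : Set ℕ) (n : ℕ) : alphaSeq x n ≤ 3/4 := by
  by_cases h : n ∈ x
  · rw [alphaSeq_of_mem h]
    have := (sqrt_term_bounds (cnt x n : ℝ) (by positivity)).2
    linarith
  · rw [alphaSeq_of_not_mem h]; norm_num

lemma alphaSeq_nonneg (x : Set ℕ) (n : ℕ) : 0 ≤ alphaSeq x n :=
  le_trans (by norm_num) (alphaSeq_ge x n)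

lemma alphaSeq_le_one (x : Set ℕ) (n : ℕ) : alphaSeq x n ≤ 1 :=
  le_trans (alphaSeq_le x n) (by norm_num)

lemma alphaSeq_diff_sq {Y Z : Set ℕ} {n : ℕ} (hn : n ∈ Y) (hn' : n ∉ Z) :
    (alphaSeq Y n - alphaSeq Z n)^2 = 1/(4 * ((cnt Y n : ℝ) + 1)) := by
  rw [alphaSeq_of_mem hn, alphaSeq_of_not_mem hn']
  have hc : (0:ℝ) ≤ (cnt Y n : ℝ) := by positivity
  set c := (cnt Y n : ℝ) with hcdef
  have hs : (0:ℝ) < Real.sqrt (c+1) := Real.sqrt_pos.2 (by linarith)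
  have hsq : Real.sqrt (c+1) ^ 2 = c + 1 := Real.sq_sqrt (by linarith)
  field_simp
  nlinarith [hsq, hs]

lemma alphaSeq_diff_pos {Y Z : Set ℕ} {n : ℕ} (hn : n ∈ Y) (hn' : n ∉ Z) :
    0 < alphaSeq Y n - alphaSeq Z n := by
  rw [alphaSeq_of_mem hn, alphaSeq_of_not_mem hn']
  have := (sqrt_term_bounds (cnt Y n : ℝ) (by positivity)).1
  linarith


def evtF (n : ℕ) : Set (ℕ → Bool) := {g | g n = false}

lemma measurableSet_evtF (n : ℕ) : MeasurableSet (evtF n) := by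
  have : evtF n = (fun g : ℕ → Bool => g n) ⁻¹' {false} := by
    ext g; simp [evtF]
  rw [this]
  exact (measurable_pi_apply n) (measurableSet_singleton false)

def ind (n : ℕ) (g : ℕ → Bool) : ℝ := if g n = false then 1 else 0

lemma measurable_ind (n : ℕ) : Measurable (ind n) := by
  unfold ind
  exact Measurable.ite (measurableSet_evtF n) measurable_const measurable_const

lemma ind_nonneg (n : ℕ) (g : ℕ → Bool) : 0 ≤ ind n g := by
  unfold ind; split <;> norm_num

lemma ind_le_one (n : ℕ) (g : ℕ → Bool) : ind n g ≤ 1 := by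
  unfold ind; split <;> norm_num

variable {w : Set ℕ} {ν : Measure (ℕ → Bool)}

lemma meas_evtF (hK : IsKakutaniProduct w ν) (n : ℕ) :
    ν (evtF n) = ENNReal.ofReal (alphaSeq w n) := by
  have h := hK.2 {n} (fun _ => false)
  simp only [Finset.mem_singleton, forall_eq, Finset.prod_singleton, if_pos rfl] at h
  exact h

lemma meas_evtF_pair (hK : IsKakutaniProduct w ν) {n m : ℕ} (hnm : n ≠ m) :
    ν (evtF n ∩ evtF m) = ENNReal.ofReal (alphaSeq w n) * ENNReal.ofReal (alphaSeq w m) := by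
  have h := hK.2 {n, m} (fun _ => false)
  rw [Finset.prod_insert (by simpa using hnm), Finset.prod_singleton] at h
  simp only [if_pos rfl] at h
  have hset : {g : ℕ → Bool | ∀ k ∈ ({n, m} : Finset ℕ), g k = false} = evtF n ∩ evtF m := by
    ext g
    simp [evtF, Finset.mem_insert, Set.mem_setOf_eq]
  rwa [hset] at h

lemma integrable_bdd [IsProbabilityMeasure ν] {f : (ℕ → Bool) → ℝ}
    (hf : Measurable f) (C : ℝ) (hC : ∀ g, |f g| ≤ C) : Integrable f ν :=
  (integrable_const C).mono' hf.aestronglyMeasurable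
    (ae_of_all _ fun g => by simpa [Real.norm_eq_abs] using hC g)

lemma ind_eq_indicator (n : ℕ) : ind n = (evtF n).indicator (fun _ => (1:ℝ)) := by
  funext g
  by_cases h : g n = false <;> simp [ind, evtF, Set.indicator_apply, Set.mem_setOf_eq, h]

lemma integral_ind (hK : IsKakutaniProduct w ν) (n : ℕ) :
    ∫ g, ind n g ∂ν = alphaSeq w n := by
  rw [show (fun g => ind n g) = ind n from rfl, ind_eq_indicator]
  rw [integral_indicator_const (1:ℝ) (measurableSet_evtF n), measureReal_def, meas_evtF hK]
  simp [ENNReal.toReal_ofReal (alphaSeq_nonneg w n)]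

lemma ind_mul_self (n : ℕ) (g : ℕ → Bool) : ind n g * ind n g = ind n g := by
  unfold ind; split <;> norm_num

lemma ind_mul_eq_indicator (n m : ℕ) :
    (fun g => ind n g * ind m g) = (evtF n ∩ evtF m).indicator (fun _ => (1:ℝ)) := by
  funext g
  by_cases h1 : g n = false <;> by_cases h2 : g m = false <;>
    simp [ind, h1, h2, Set.indicator_apply, evtF, Set.mem_setOf_eq]

lemma integral_ind_mul (hK : IsKakutaniProduct w ν) {n m : ℕ} (hnm : n ≠ m) :
    ∫ g, ind n g * ind m g ∂ν = alphaSeq w n * alphaSeq w m := by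
  rw [ind_mul_eq_indicator]
  rw [integral_indicator_const (1:ℝ) ((measurableSet_evtF n).inter (measurableSet_evtF m)),
    measureReal_def, meas_evtF_pair hK hnm]
  rw [ENNReal.toReal_mul]
  simp [ENNReal.toReal_ofReal (alphaSeq_nonneg w n), ENNReal.toReal_ofReal (alphaSeq_nonneg w m)]

lemma integrable_ind (hK : IsKakutaniProduct w ν) (n : ℕ) : Integrable (ind n) ν := by
  haveI := hK.1
  exact integrable_bdd (measurable_ind n) 1 (fun g => by
    rw [abs_of_nonneg (ind_nonneg n g)]; exact ind_le_one n g)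

lemma integrable_ind_mul (hK : IsKakutaniProduct w ν) (n m : ℕ) :
    Integrable (fun g => ind n g * ind m g) ν := by
  haveI := hK.1
  refine integrable_bdd ((measurable_ind n).mul (measurable_ind m)) 1 (fun g => ?_)
  rw [abs_of_nonneg (mul_nonneg (ind_nonneg n g) (ind_nonneg m g))]
  calc ind n g * ind m g ≤ 1 * 1 := by
        exact mul_le_mul (ind_le_one n g) (ind_le_one m g) (ind_nonneg m g) (by norm_num)
    _ = 1 := by norm_num

lemma integral_cov (hK : IsKakutaniProduct w ν) (n m : ℕ) :
    ∫ g, (ind n g - alphaSeq w n) * (ind m g - alphaSeq w m) ∂ν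
      = if n = m then alphaSeq w n * (1 - alphaSeq w n) else 0 := by
  haveI := hK.1
  set bn := alphaSeq w n
  set bm := alphaSeq w m
  have hexp : (fun g => (ind n g - bn) * (ind m g - bm))
      = fun g => ind n g * ind m g - bn * ind m g - bm * ind n g + bn * bm := by
    funext g; ring
  have h1 : Integrable (fun g => ind n g * ind m g) ν := integrable_ind_mul hK n m
  have h2 : Integrable (fun g => bn * ind m g) ν := (integrable_ind hK m).const_mul bn
  have h3 : Integrable (fun g => bm * ind n g) ν := (integrable_ind hK n).const_mul bm
  have h12 : Integrable (fun g => ind n g * ind m g - bn * ind m g) ν := h1.sub h2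
  have h123 : Integrable (fun g => ind n g * ind m g - bn * ind m g - bm * ind n g) ν :=
    h12.sub h3
  rw [hexp, integral_add h123 (integrable_const _),
    integral_sub h12 h3, integral_sub h1 h2,
    integral_const_mul, integral_const_mul, integral_ind hK n, integral_ind hK m,
    integral_const]
  simp only [measureReal_def, measure_univ, ENNReal.toReal_one, one_smul]
  by_cases hnm : n = m
  · subst hnm
    rw [if_pos rfl]
    have : (fun g => ind n g * ind n g) = ind n := by funext g; exact ind_mul_self n g
    rw [this, integral_ind hK n]
    ring
  · rw [if_neg hnm, integral_ind_mul hK hnm]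
    ring

lemma ind_sub_abs_le (w : Set ℕ) (n : ℕ) (g : ℕ → Bool) : |ind n g - alphaSeq w n| ≤ 1 := by
  have h1 := ind_nonneg n g
  have h2 := ind_le_one n g
  have h3 := alphaSeq_nonneg w n
  have h4 := alphaSeq_le_one w n
  rw [abs_le]; constructor <;> linarith

lemma cheb (hK : IsKakutaniProduct w ν) (F : Finset ℕ) (d aa : ℕ → ℝ) (t : ℝ) (ht : 0 < t) :
    ν {g | t ≤ |(∑ n ∈ F, d n * (ind n g - aa n)) - ∑ n ∈ F, d n * (alphaSeq w n - aa n)|}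
      ≤ ENNReal.ofReal ((∑ n ∈ F, (d n)^2 / 4) / t^2) := by
  haveI := hK.1
  set β : ℕ → ℝ := alphaSeq w with hβ
  set T : (ℕ → Bool) → ℝ := fun g => ∑ n ∈ F, d n * (ind n g - β n) with hT
  have hST : ∀ g, (∑ n ∈ F, d n * (ind n g - aa n)) - ∑ n ∈ F, d n * (β n - aa n) = T g := by
    intro g
    rw [hT, ← Finset.sum_sub_distrib]
    exact Finset.sum_congr rfl fun n _ => by ring
  have hTmeas : Measurable T := by
    apply Finset.measurable_sum
    intro n _
    exact (((measurable_ind n).sub measurable_const).const_mul (d n))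
  set C : ℝ := ∑ n ∈ F, |d n| with hC
  have hTbd : ∀ g, |T g| ≤ C := by
    intro g
    refine le_trans (Finset.abs_sum_le_sum_abs _ _) (Finset.sum_le_sum fun n _ => ?_)
    rw [abs_mul]
    calc |d n| * |ind n g - β n| ≤ |d n| * 1 :=
          mul_le_mul_of_nonneg_left (ind_sub_abs_le w n g) (abs_nonneg _)
      _ = |d n| := mul_one _
  have hTint : Integrable T ν := integrable_bdd hTmeas C hTbd
  have hT2meas : Measurable (fun g => T g ^ 2) := hTmeas.pow_const 2
  have hT2int : Integrable (fun g => T g ^ 2) ν := by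
    refine integrable_bdd hT2meas (C^2) (fun g => ?_)
    rw [abs_pow, sq_abs] ; rw [← sq_abs]
    exact pow_le_pow_left₀ (abs_nonneg _) (hTbd g) 2
  -- compute ∫ T²
  have hint_term : ∀ n m : ℕ, Integrable
      (fun g => d n * (ind n g - β n) * (d m * (ind m g - β m))) ν := by
    intro n m
    refine integrable_bdd ?_ (|d n| * |d m|) (fun g => ?_)
    · exact (((measurable_ind n).sub measurable_const).const_mul (d n)).mul
        (((measurable_ind m).sub measurable_const).const_mul (d m))
    · have h1 := ind_sub_abs_le w n g
      have h2 := ind_sub_abs_le w m g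
      rw [abs_mul, abs_mul, abs_mul]
      have e1 : |d n| * |ind n g - β n| ≤ |d n| * 1 :=
        mul_le_mul_of_nonneg_left h1 (abs_nonneg _)
      have e2 : |d m| * |ind m g - β m| ≤ |d m| * 1 :=
        mul_le_mul_of_nonneg_left h2 (abs_nonneg _)
      calc |d n| * |ind n g - β n| * (|d m| * |ind m g - β m|)
          ≤ (|d n| * 1) * (|d m| * 1) := by
            apply mul_le_mul e1 e2 (by positivity) (by positivity)
        _ = |d n| * |d m| := by ring
  have hvar : ∫ g, T g ^ 2 ∂ν = ∑ n ∈ F, (d n)^2 * (β n * (1 - β n)) := by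
    have hsq : ∀ g, T g ^ 2 = ∑ n ∈ F, ∑ m ∈ F,
        d n * (ind n g - β n) * (d m * (ind m g - β m)) := by
      intro g
      rw [hT, sq, Finset.sum_mul_sum]
    calc ∫ g, T g ^ 2 ∂ν
        = ∫ g, (∑ n ∈ F, ∑ m ∈ F, d n * (ind n g - β n) * (d m * (ind m g - β m))) ∂ν := by
          congr 1; funext g; exact hsq g
      _ = ∑ n ∈ F, ∑ m ∈ F, ∫ g, d n * (ind n g - β n) * (d m * (ind m g - β m)) ∂ν := by
          rw [integral_finset_sum F (fun n _ => integrable_finset_sum F (fun m _ => hint_term n m))]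
          exact Finset.sum_congr rfl fun n _ =>
            integral_finset_sum F (fun m _ => hint_term n m)
      _ = ∑ n ∈ F, ∑ m ∈ F, (d n * d m) * ∫ g, (ind n g - β n) * (ind m g - β m) ∂ν := by
          refine Finset.sum_congr rfl fun n _ => Finset.sum_congr rfl fun m _ => ?_
          rw [← integral_const_mul]
          congr 1; funext g; ring
      _ = ∑ n ∈ F, (d n)^2 * (β n * (1 - β n)) := by
          refine Finset.sum_congr rfl fun n hn => ?_
          rw [Finset.sum_eq_single n]
          · rw [integral_cov hK n n, if_pos rfl]; ring
          · intro m hm hmn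
            rw [integral_cov hK n m, if_neg (Ne.symm hmn), mul_zero]
          · intro h; exact absurd hn h
  have hvarle : ∫ g, T g ^ 2 ∂ν ≤ ∑ n ∈ F, (d n)^2 / 4 := by
    rw [hvar]
    refine Finset.sum_le_sum fun n _ => ?_
    have h3 : 0 ≤ β n := alphaSeq_nonneg w n
    have h4 : β n ≤ 1 := alphaSeq_le_one w n
    have : β n * (1 - β n) ≤ 1/4 := by nlinarith [sq_nonneg (β n - 1/2)]
    have hd2 : (0:ℝ) ≤ (d n)^2 := sq_nonneg _
    calc (d n)^2 * (β n * (1 - β n)) ≤ (d n)^2 * (1/4) :=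
          mul_le_mul_of_nonneg_left this hd2
      _ = (d n)^2 / 4 := by ring
  -- Chebyshev
  set A : Set (ℕ → Bool) := {g | t ≤ |T g|} with hA
  have hAmeas : MeasurableSet A := measurableSet_le measurable_const hTmeas.abs
  have key : (ν A).toReal * t^2 ≤ ∫ g, T g ^ 2 ∂ν := by
    have e1 : (ν A).toReal * t^2 = ∫ _ in A, t^2 ∂ν := by
      rw [setIntegral_const, smul_eq_mul, measureReal_def]
    rw [e1]
    calc ∫ _ in A, t^2 ∂ν ≤ ∫ g in A, T g ^ 2 ∂ν := by
          refine setIntegral_mono_on (integrableOn_const (measure_ne_top ν A))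
            (hT2int.integrableOn) hAmeas (fun g hg => ?_)
          have : t ≤ |T g| := hg
          calc t^2 ≤ |T g|^2 := pow_le_pow_left₀ ht.le this 2
            _ = T g ^ 2 := sq_abs _
      _ ≤ ∫ g, T g ^ 2 ∂ν :=
          setIntegral_le_integral hT2int (ae_of_all _ fun g => sq_nonneg _)
  have hfin : ν A ≠ ⊤ := measure_ne_top ν A
  have h2 : (ν A).toReal ≤ (∑ n ∈ F, (d n)^2 / 4) / t^2 := by
    rw [le_div_iff₀ (by positivity)]
    exact le_trans key hvarle
  calc ν {g | t ≤ |(∑ n ∈ F, d n * (ind n g - aa n)) - ∑ n ∈ F, d n * (β n - aa n)|}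
      = ν A := by
        congr 1; ext g; rw [hA, Set.mem_setOf_eq, Set.mem_setOf_eq, hST g]
    _ = ENNReal.ofReal ((ν A).toReal) := (ENNReal.ofReal_toReal hfin).symm
    _ ≤ ENNReal.ofReal ((∑ n ∈ F, (d n)^2 / 4) / t^2) := ENNReal.ofReal_le_ofReal h2


lemma exists_large_finset {Y Z : Set ℕ} (hY : Y.Infinite) (hfin : (Y ∩ Z).Finite) (c : ℝ) :
    ∃ F : Finset ℕ, (↑F : Set ℕ) ⊆ Y \ Z ∧
      c ≤ ∑ n ∈ F, (alphaSeq Y n - alphaSeq Z n)^2 := by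
  classical
  have hY' : {n | n ∈ Y}.Infinite := by rwa [Set.setOf_mem_eq]
  set e : ℕ → ℕ := Nat.nth (· ∈ Y) with he
  have hemem : ∀ j, e j ∈ Y := fun j => Nat.nth_mem_of_infinite hY' j
  have heinj : Function.Injective e := (Nat.nth_strictMono hY').injective
  set K : ℕ := hfin.toFinset.card with hK
  obtain ⟨J, hJ⟩ : ∃ J : ℕ, 4*c + K ≤ ∑ i ∈ Finset.range J, (1 / (i + 1) : ℝ) := by
    have := Real.tendsto_sum_range_one_div_nat_succ_atTop
    rw [tendsto_atTop] at this
    exact ((this (4*c + K)).exists)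
  set G : Finset ℕ := (Finset.range J).filter (fun j => e j ∉ Z) with hG
  refine ⟨G.image e, ?_, ?_⟩
  · intro m hm
    simp only [Finset.coe_image, Set.mem_image, Finset.mem_coe, hG, Finset.mem_filter] at hm
    obtain ⟨j, ⟨_, hjZ⟩, rfl⟩ := hm
    exact ⟨hemem j, hjZ⟩
  · rw [Finset.sum_image (fun a _ b _ h => heinj h)]
    have hterm : ∀ j ∈ G, (alphaSeq Y (e j) - alphaSeq Z (e j))^2 = 1/(4*((j:ℝ)+1)) := by
      intro j hj
      rw [hG, Finset.mem_filter] at hj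
      rw [alphaSeq_diff_sq (hemem j) hj.2]
      congr 3
      have hcnt : cnt Y (e j) = j := by
        have h0 := Nat.count_nth_of_infinite hY' j
        unfold cnt
        convert h0 using 2
      rw [hcnt]
    rw [Finset.sum_congr rfl hterm]
    -- lower bound for ∑_{j ∈ G} 1/(4(j+1))
    set B : Finset ℕ := (Finset.range J).filter (fun j => ¬ (e j ∉ Z)) with hB
    have hsplit : ∑ j ∈ G, (1:ℝ)/(4*((j:ℝ)+1)) + ∑ j ∈ B, (1:ℝ)/(4*((j:ℝ)+1))
        = ∑ j ∈ Finset.range J, (1:ℝ)/(4*((j:ℝ)+1)) :=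
      Finset.sum_filter_add_sum_filter_not _ _ _
  -- card bound for B
    have hcardB : B.card ≤ K := by
      rw [hK]
      apply Finset.card_le_card_of_injOn e
      · intro j hj
        rw [hB, Finset.mem_coe, Finset.mem_filter, not_not] at hj
        rw [Finset.mem_coe, Set.Finite.mem_toFinset]
        exact ⟨hemem j, hj.2⟩
      · exact fun a _ b _ h => heinj h
    have hBle : ∑ j ∈ B, (1:ℝ)/(4*((j:ℝ)+1)) ≤ (K:ℝ)/4 := by
      calc ∑ j ∈ B, (1:ℝ)/(4*((j:ℝ)+1)) ≤ ∑ _j ∈ B, (1:ℝ)/4 := by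
            refine Finset.sum_le_sum fun j _ => ?_
            rw [div_le_div_iff₀ (by positivity) (by norm_num)]
            have : (0:ℝ) ≤ (j:ℝ) := Nat.cast_nonneg j
            linarith
        _ = B.card * (1/4 : ℝ) := by rw [Finset.sum_const, nsmul_eq_mul]
        _ ≤ (K:ℝ) * (1/4 : ℝ) := by
            apply mul_le_mul_of_nonneg_right _ (by norm_num)
            exact_mod_cast hcardB
        _ = (K:ℝ)/4 := by ring
    have hrange : ∑ j ∈ Finset.range J, (1:ℝ)/(4*((j:ℝ)+1))
        = (1/4) * ∑ i ∈ Finset.range J, (1 / ((i:ℝ) + 1) : ℝ) := by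
      rw [Finset.mul_sum]
      refine Finset.sum_congr rfl fun j _ => ?_
      have : ((j:ℝ)+1) ≠ 0 := by positivity
      field_simp
    have : (1/4:ℝ) * (4*c + K) ≤ (1/4) * ∑ i ∈ Finset.range J, (1 / ((i:ℝ) + 1) : ℝ) :=
      mul_le_mul_of_nonneg_left hJ (by norm_num)
    linarith [hsplit, hBle, hrange, this]

theorem kak_sing {Y Z : Set ℕ} (hY : Y.Infinite) (hfin : (Y ∩ Z).Finite)
    {νY νZ : Measure (ℕ → Bool)} (hKY : IsKakutaniProduct Y νY)
    (hKZ : IsKakutaniProduct Z νZ) : νY.MutuallySingular νZ := by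
  classical
  set d : ℕ → ℝ := fun n => alphaSeq Y n - alphaSeq Z n with hd
  set aa : ℕ → ℝ := alphaSeq Z with haa
  -- choose the finsets
  have hch : ∀ k : ℕ, ∃ F : Finset ℕ, (↑F : Set ℕ) ⊆ Y \ Z ∧
      (4:ℝ)^k ≤ ∑ n ∈ F, (d n)^2 := fun k => exists_large_finset hY hfin ((4:ℝ)^k)
  choose F hFsub hFge using hch
  set A : ℕ → ℝ := fun k => ∑ n ∈ F k, (d n)^2 with hA
  have hApos : ∀ k, 0 < A k := fun k =>
    lt_of_lt_of_le (by positivity) (hFge k)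
  set S : ℕ → (ℕ → Bool) → ℝ := fun k g => ∑ n ∈ F k, d n * (ind n g - aa n) with hS
  set B : ℕ → Set (ℕ → Bool) := fun k => {g | A k / 2 ≤ S k g} with hB
  have hSmeas : ∀ k, Measurable (S k) := by
    intro k
    apply Finset.measurable_sum
    intro n _
    exact ((measurable_ind n).sub measurable_const).const_mul (d n)
  have hBmeas : ∀ k, MeasurableSet (B k) := fun k =>
    measurableSet_le measurable_const (hSmeas k)
  -- the bound (A k/4)... : both measures
  have hbound : ∀ k : ℕ, ENNReal.ofReal ((∑ n ∈ F k, (d n)^2 / 4) / (A k / 2)^2)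
      ≤ ENNReal.ofReal ((1/4:ℝ)^k) := by
    intro k
    apply ENNReal.ofReal_le_ofReal
    have h1 : (∑ n ∈ F k, (d n)^2 / 4) = A k / 4 := by
      rw [hA, ← Finset.sum_div]
    rw [h1]
    have h0 : A k ≠ 0 := ne_of_gt (hApos k)
    have h2 : (A k / 4) / (A k / 2)^2 = 1 / A k := by
      field_simp
      ring
    rw [h2, div_pow, one_pow]
    exact one_div_le_one_div_of_le (by positivity) (hFge k)
  -- νZ (B k) small
  have hZk : ∀ k, νZ (B k) ≤ ENNReal.ofReal ((1/4:ℝ)^k) := by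
    intro k
    refine le_trans (le_trans (measure_mono ?_) (cheb hKZ (F k) d aa (A k / 2)
      (by linarith [hApos k]))) (hbound k)
    intro g hg
    rw [hB, Set.mem_setOf_eq] at hg
    rw [Set.mem_setOf_eq]
    have hE0 : ∑ n ∈ F k, d n * (alphaSeq Z n - aa n) = 0 := by
      apply Finset.sum_eq_zero
      intro n _
      rw [haa]; ring
    rw [hE0, sub_zero]
    exact le_trans hg (le_abs_self _)
  -- νY (B k)ᶜ small
  have hYk : ∀ k, νY ((B k)ᶜ) ≤ ENNReal.ofReal ((1/4:ℝ)^k) := by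
    intro k
    refine le_trans (le_trans (measure_mono ?_) (cheb hKY (F k) d aa (A k / 2)
      (by linarith [hApos k]))) (hbound k)
    intro g hg
    rw [Set.mem_compl_iff, hB, Set.mem_setOf_eq, not_le] at hg
    rw [Set.mem_setOf_eq]
    have hEA : ∑ n ∈ F k, d n * (alphaSeq Y n - aa n) = A k := by
      rw [hA]
      refine Finset.sum_congr rfl fun n _ => ?_
      rw [haa, hd]; ring
    rw [hEA]
    rw [abs_sub_comm]
    calc A k / 2 ≤ A k - S k g := by linarith
      _ ≤ |A k - S k g| := le_abs_self _
  -- geometric sum finite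
  have hgeo : (∑' k : ℕ, ENNReal.ofReal ((1/4:ℝ)^k)) ≠ ⊤ := by
    have : ∀ k : ℕ, ENNReal.ofReal ((1/4:ℝ)^k) = (ENNReal.ofReal (1/4:ℝ))^k := fun k =>
      ENNReal.ofReal_pow (by norm_num) k
    rw [tsum_congr this, ENNReal.tsum_geometric]
    rw [Ne, ENNReal.inv_eq_top, tsub_eq_zero_iff_le]
    rw [not_le]
    exact ENNReal.ofReal_lt_one.2 (by norm_num)
  have hZsum : (∑' k, νZ (B k)) ≠ ⊤ :=
    ne_top_of_le_ne_top hgeo (ENNReal.tsum_le_tsum hZk)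
  have hYsum : (∑' k, νY ((B k)ᶜ)) ≠ ⊤ :=
    ne_top_of_le_ne_top hgeo (ENNReal.tsum_le_tsum hYk)
  set L : Set (ℕ → Bool) := limsup B atTop with hL
  have hZL : νZ L = 0 := measure_limsup_atTop_eq_zero hZsum
  have hYL : νY Lᶜ = 0 := by
    have hcompl : Lᶜ = liminf (fun k => (B k)ᶜ) atTop := by
      rw [hL, limsup_compl]
      rfl
    have h1 : Lᶜ ⊆ limsup (fun k => (B k)ᶜ) atTop := by
      rw [hcompl]
      exact liminf_le_limsup
    exact le_antisymm (le_trans (measure_mono h1)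
      (le_of_eq (measure_limsup_atTop_eq_zero hYsum))) zero_le
  refine ⟨Lᶜ, ?_, hYL, ?_⟩
  · exact (MeasurableSet.measurableSet_limsup hBmeas).compl
  · rwa [compl_compl]


def nodeSum (a : ℕ → Bool) (n : ℕ) : ℕ := ∑ i ∈ Finset.range n, (if a i then 2^i else 0)

def node (a : ℕ → Bool) (n : ℕ) : ℕ := 2^n + nodeSum a n

lemma nodeSum_lt (a : ℕ → Bool) (n : ℕ) : nodeSum a n < 2^n := by
  induction n with
  | zero => simp [nodeSum]
  | succ n ih =>
    have h : nodeSum a (n+1) = nodeSum a n + (if a n then 2^n else 0) := by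
      unfold nodeSum; rw [Finset.sum_range_succ]
    rw [h, pow_succ]
    split <;> omega

lemma node_lt (a : ℕ → Bool) (n : ℕ) : node a n < 2^(n+1) := by
  have := nodeSum_lt a n
  unfold node
  rw [pow_succ]
  omega

lemma node_ge (a : ℕ → Bool) (n : ℕ) : 2^n ≤ node a n := Nat.le_add_right _ _

lemma node_eq_dim {a b : ℕ → Bool} {n m : ℕ} (h : node a n = node b m) : n = m := by
  by_contra hne
  rcases Nat.lt_or_ge n m with hlt | hge
  · have h1 : node a n < 2^(n+1) := node_lt a n
    have h2 : 2^m ≤ node b m := node_ge b m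
    have h3 : 2^(n+1) ≤ 2^m := Nat.pow_le_pow_right (by norm_num) hlt
    omega
  · have hlt : m < n := lt_of_le_of_ne hge (Ne.symm hne)
    have h1 : node b m < 2^(m+1) := node_lt b m
    have h2 : 2^n ≤ node a n := node_ge a n
    have h3 : 2^(m+1) ≤ 2^n := Nat.pow_le_pow_right (by norm_num) hlt
    omega

lemma nodeSum_inj : ∀ (n : ℕ) (a b : ℕ → Bool), nodeSum a n = nodeSum b n →
    ∀ i, i < n → a i = b i := by
  intro n
  induction n with
  | zero => intro a b _ i hi; omega
  | succ n ih =>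
    intro a b h i hi
    have hsa : nodeSum a (n+1) = nodeSum a n + (if a n then 2^n else 0) := by
      unfold nodeSum; rw [Finset.sum_range_succ]
    have hsb : nodeSum b (n+1) = nodeSum b n + (if b n then 2^n else 0) := by
      unfold nodeSum; rw [Finset.sum_range_succ]
    have hla := nodeSum_lt a n
    have hlb := nodeSum_lt b n
    have hab : a n = b n := by
      cases ha : a n <;> cases hb : b n <;> simp [ha, hb] at hsa hsb ⊢ <;> omega
    have hsum : nodeSum a n = nodeSum b n := by
      rw [hsa, hsb, hab] at h
      omega
    rcases Nat.lt_or_ge i n with hin | hin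
    · exact ih a b hsum i hin
    · have : i = n := by omega
      rw [this]; exact hab

lemma node_congr {a b : ℕ → Bool} {n : ℕ} (h : ∀ i, i < n → a i = b i) :
    node a n = node b n := by
  unfold node nodeSum
  congr 1
  exact Finset.sum_congr rfl fun i hi => by rw [h i (Finset.mem_range.1 hi)]

lemma node_bits {a b : ℕ → Bool} {n : ℕ} (h : node a n = node b n) :
    ∀ i, i < n → a i = b i := by
  apply nodeSum_inj n
  unfold node at h
  omega

lemma node_strictMono (a : ℕ → Bool) : StrictMono (node a) := by
  apply strictMono_nat_of_lt_succ
  intro n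
  calc node a n < 2^(n+1) := node_lt a n
    _ ≤ node a (n+1) := node_ge a (n+1)

/-- If `x ∈ [ω]^ω` and `U` is a nonempty open subset of `[x]^ω` (as a subspace
of Cantor space via characteristic functions), then there is a nonempty perfect
set `P ⊆ U` such that the measures `μ^y`, `y ∈ P`, are pairwise mutually
singular. -/
theorem perfect_orthogonal_family_in_open (μ : Set ℕ → Measure (ℕ → Bool))
    (hμ : ∀ w : Set ℕ, IsKakutaniProduct w (μ w))
    (x : Set ℕ) (hx : x.Infinite)
    (U : Set {f : ℕ → Bool // (toSet f).Infinite ∧ toSet f ⊆ x})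
    (hU : IsOpen U) (hUne : U.Nonempty) :
    ∃ P ⊆ U, P.Nonempty ∧ Perfect P ∧
      ∀ y ∈ P, ∀ z ∈ P, y ≠ z →
        Measure.MutuallySingular (μ (toSet y.1)) (μ (toSet z.1)) := by
  classical
  obtain ⟨u, hu⟩ := hUne
  obtain ⟨V, hV, hVU⟩ := isOpen_induced_iff.1 hU
  have huV : (u.1 : ℕ → Bool) ∈ V := by
    rw [← hVU] at hu; exact hu
  obtain ⟨I, o, hIo, hpi⟩ := isOpen_pi_iff.1 hV u.1 huV
  set N : ℕ := I.sup id + 1 with hN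
  have hIN : ∀ n ∈ I, n < N := fun n hn =>
    Nat.lt_succ_of_le (Finset.le_sup (f := id) hn)
  have hcyl : ∀ g : ℕ → Bool, (∀ n ∈ I, g n = u.1 n) → g ∈ V := by
    intro g hg
    refine hpi ?_
    rw [Set.mem_pi]
    intro n hn
    rw [Finset.mem_coe] at hn
    rw [hg n hn]
    exact (hIo n hn).2
  set X0 : Set ℕ := toSet u.1 with hX0
  have hX0inf : X0.Infinite := u.2.1
  have hX0x : X0 ⊆ x := u.2.2
  set t : Set ℕ := X0 ∩ {n | n < N} with ht
  set x' : Set ℕ := X0 ∩ {n | ¬ n < N} with hx'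
  have htfin : t.Finite := (Set.finite_lt_nat N).subset Set.inter_subset_right
  have hx'inf : x'.Infinite := by
    have hxd : x' = X0 \ {n | n < N} := by
      ext n; simp [hx', Set.mem_diff, Set.mem_inter_iff]
    rw [hxd]
    exact hX0inf.diff (Set.finite_lt_nat N)
  have hx'inf' : {n | n ∈ x'}.Infinite := by rwa [Set.setOf_mem_eq]
  set e : ℕ → ℕ := Nat.nth (· ∈ x') with he
  have hemem : ∀ j, e j ∈ x' := fun j => Nat.nth_mem_of_infinite hx'inf' j
  have heinj : Function.Injective e := (Nat.nth_strictMono hx'inf').injective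
  have hele : ∀ j, j ≤ e j := fun j => (Nat.nth_strictMono hx'inf').le_apply
  set Ya : (ℕ → Bool) → Set ℕ := fun a => Set.range (fun n => e (node a n)) with hYa
  set G : (ℕ → Bool) → (ℕ → Bool) := fun a m => decide (m ∈ t ∪ Ya a) with hG
  have htoSet : ∀ a, toSet (G a) = t ∪ Ya a := by
    intro a; ext m
    simp [toSet, hG, Set.mem_setOf_eq]
  have hYasub : ∀ a, Ya a ⊆ x' := by
    rintro a m ⟨n, rfl⟩; exact hemem _
  have hx'X0 : x' ⊆ X0 := fun m hm => hm.1
  have htsub : t ⊆ X0 := fun m hm => hm.1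
  have hYainf : ∀ a, (Ya a).Infinite := fun a =>
    Set.infinite_range_of_injective (fun n m h => (node_strictMono a).injective (heinj h))
  have hsubx : ∀ a, toSet (G a) ⊆ x := by
    intro a
    rw [htoSet a]
    exact Set.union_subset (htsub.trans hX0x) ((hYasub a).trans (hx'X0.trans hX0x))
  have hinf : ∀ a, (toSet (G a)).Infinite := by
    intro a
    rw [htoSet a]
    exact (hYainf a).mono Set.subset_union_right
  -- locality
  have hmem_congr : ∀ (m : ℕ) (a b : ℕ → Bool), (∀ i, i ≤ m → a i = b i) →
      m ∈ Ya a → m ∈ Ya b := by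
    rintro m a b hab ⟨n, hn⟩
    have h1 : node a n ≤ m := hn ▸ hele _
    have h2 : 2^n ≤ node a n := node_ge a n
    have h3 : n < 2^n := Nat.lt_two_pow_self
    have hnm : n ≤ m := by omega
    refine ⟨n, ?_⟩
    have : node b n = node a n :=
      node_congr (fun i hi => (hab i (le_of_lt (lt_of_lt_of_le hi hnm))).symm)
    rw [show (fun n => e (node b n)) n = e (node b n) from rfl, this]
    exact hn
  have hGm : ∀ (m : ℕ) (a b : ℕ → Bool), (∀ i, i ≤ m → a i = b i) → G a m = G b m := by
    intro m a b hab
    have hiff : (m ∈ t ∪ Ya a) ↔ (m ∈ t ∪ Ya b) := by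
      constructor
      · rintro (h | h)
        · exact Or.inl h
        · exact Or.inr (hmem_congr m a b hab h)
      · rintro (h | h)
        · exact Or.inl h
        · exact Or.inr (hmem_congr m b a (fun i hi => (hab i hi).symm) h)
    rw [hG]
    simp only []
    rw [decide_eq_decide]
    exact hiff
  have hGcont : Continuous G := by
    apply continuous_pi
    intro m
    have hr : Continuous (fun (a : ℕ → Bool) (i : Fin (m+1)) => a i.1) :=
      continuous_pi fun i => continuous_apply (i.1 : ℕ)
    have hfact : (fun a => G a m)
        = (fun v : Fin (m+1) → Bool =>
            G (fun i => if h : i < m+1 then v ⟨i, h⟩ else false) m)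
          ∘ (fun (a : ℕ → Bool) (i : Fin (m+1)) => a i.1) := by
      funext a
      show G a m = G (fun i => if h : i < m+1 then a i else false) m
      apply hGm
      intro i hi
      rw [dif_pos (Nat.lt_succ_of_le hi)]
    rw [hfact]
    exact Continuous.comp continuous_of_discreteTopology hr
  have hGinj : Function.Injective G := by
    intro a b hab
    by_contra hne
    have hex : ∃ n, a n ≠ b n := by
      by_contra h
      push_neg at h
      exact hne (funext h)
    set n0 := Nat.find hex with hn0def
    have hn0 : a n0 ≠ b n0 := Nat.find_spec hex
    have hmin : ∀ i, i < n0 → a i = b i := fun i hi => by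
      have := Nat.find_min hex hi
      simpa using this
    set m := e (node a (n0+1)) with hm
    have hma : m ∈ Ya a := ⟨n0+1, rfl⟩
    have hmx' : m ∈ x' := hemem _
    have hmt : m ∉ t := by
      intro hmem
      exact hmx'.2 hmem.2
    have hmb : m ∉ Ya b := by
      rintro ⟨n, hn⟩
      have h1 : node b n = node a (n0+1) := heinj hn
      have h2 : n = n0 + 1 := node_eq_dim h1
      subst h2
      have h3 := node_bits h1 n0 (Nat.lt_succ_self n0)
      exact hn0 h3.symm
    have hcon : G a m = G b m := congrFun hab m
    rw [hG] at hcon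
    simp only [decide_eq_decide] at hcon
    have : m ∈ t ∪ Ya b := hcon.1 (Or.inr hma)
    rcases this with h | h
    · exact hmt h
    · exact hmb h
  set Φ : (ℕ → Bool) → {f : ℕ → Bool // (toSet f).Infinite ∧ toSet f ⊆ x} :=
    fun a => ⟨G a, hinf a, hsubx a⟩ with hΦ
  have hΦcont : Continuous Φ := Continuous.subtype_mk hGcont _
  have hΦinj : Function.Injective Φ := fun a b h =>
    hGinj (congrArg Subtype.val h)
  set P := Set.range Φ with hP
  have hΦU : ∀ a, Φ a ∈ U := by
    intro a
    rw [← hVU]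
    show G a ∈ V
    apply hcyl
    intro n hn
    have hnN : n < N := hIN n hn
    have h1 : n ∉ Ya a := by
      intro hmem
      exact ((hYasub a) hmem).2 hnN
    have hiff : (n ∈ t ∪ Ya a) ↔ (u.1 n = true) := by
      constructor
      · rintro (htn | hyan)
        · exact htn.1
        · exact absurd hyan h1
      · intro hu1
        exact Or.inl ⟨hu1, hnN⟩
    calc G a n = decide (n ∈ t ∪ Ya a) := rfl
      _ = decide (u.1 n = true) := by rw [decide_eq_decide]; exact hiff
      _ = u.1 n := by cases h : u.1 n <;> simp
  refine ⟨P, ?_, ⟨Φ (fun _ => false), Set.mem_range_self _⟩, ⟨?_, ?_⟩, ?_⟩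
  · rintro _ ⟨a, rfl⟩
    exact hΦU a
  · exact (isCompact_range hΦcont).isClosed
  · -- Preperfect
    rintro _ ⟨a, rfl⟩
    rw [accPt_iff_nhds]
    intro W hW
    have hW' : Φ ⁻¹' W ∈ nhds a := hΦcont.continuousAt.preimage_mem_nhds hW
    obtain ⟨O, hOsub, hOopen, haO⟩ := mem_nhds_iff.1 hW'
    obtain ⟨J, oJ, hJo, hJsub⟩ := isOpen_pi_iff.1 hOopen a haO
    set M := J.sup id + 1 with hM
    set b := Function.update a M (!(a M)) with hb
    have hbJ : b ∈ (J : Set ℕ).pi oJ := by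
      rw [Set.mem_pi]
      intro i hiJ
      rw [Finset.mem_coe] at hiJ
      have hiM : i ≠ M := by
        have := Finset.le_sup (f := id) hiJ
        simp only [id] at this
        omega
      rw [hb, Function.update_of_ne hiM]
      exact (hJo i hiJ).2
    have hbW : Φ b ∈ W := hOsub (hJsub hbJ)
    have hba : b ≠ a := by
      intro h
      have hM' : b M = a M := congrFun h M
      rw [hb, Function.update_self] at hM'
      simp at hM'
    exact ⟨Φ b, ⟨hbW, Set.mem_range_self _⟩, fun h => hba (hΦinj h)⟩
  · -- mutual singularity
    rintro _ ⟨a, rfl⟩ _ ⟨b, rfl⟩ hne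
    have hab : a ≠ b := fun h => hne (by rw [h])
    have hex : ∃ n, a n ≠ b n := by
      by_contra h
      push_neg at h
      exact hab (funext h)
    set n0 := Nat.find hex with hn0def
    have hn0 : a n0 ≠ b n0 := Nat.find_spec hex
    have hYab : (Ya a ∩ Ya b).Finite := by
      have hss : Ya a ∩ Ya b ⊆ (fun n => e (node a n)) '' {n | n ≤ n0} := by
        intro m hm
        obtain ⟨n, hn⟩ := hm.1
        obtain ⟨n', hn'⟩ := hm.2
        have h1 : node b n' = node a n := heinj (hn'.trans hn.symm)
        have h2 : n' = n := node_eq_dim h1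
        rw [h2] at h1
        have hn_le : n ≤ n0 := by
          by_contra hgt
          push_neg at hgt
          have h3 := node_bits h1 n0 hgt
          exact hn0 h3.symm
        exact ⟨n, hn_le, hn⟩
      exact Set.Finite.subset ((Set.finite_le_nat n0).image _) hss
    have hYZfin : (toSet (Φ a).1 ∩ toSet (Φ b).1).Finite := by
      have hss : toSet (G a) ∩ toSet (G b) ⊆ t ∪ (Ya a ∩ Ya b) := by
        intro m hm
        rw [htoSet a, htoSet b] at hm
        rcases hm.1 with h1 | h1
        · exact Or.inl h1
        rcases hm.2 with h2 | h2
        · exact Or.inl h2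
        · exact Or.inr ⟨h1, h2⟩
      exact Set.Finite.subset (htfin.union hYab) hss
    exact kak_sing (hinf a) hYZfin (hμ _) (hμ _)

end
end

section
/- Let R be an analytic symmetric binary relation on a Polish space X, let η : 2^ω → X be continuous, and let P ⊆ 2^ω be a nonempty perfect set. Then there is a nonempty perfect set Q ⊆ P such that either η(Q) is R-complete (any two distinct elements of η(Q) are R-related) or η(Q) is R-discrete (no two distinct elements of η(Q) are R-related). -/
open Set Topology Filter

namespace GalvinAux

/-! ### Generic cylinder combinatorics -/

variable {β : Type*}

/-- cylinder of a finite string in `ℕ → β` -/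
def cylP (d : β) (l : List β) : Set (ℕ → β) := {x | ∀ i, i < l.length → x i = l.getD i d}

def listOf (x : ℕ → β) (n : ℕ) : List β := List.ofFn (fun i : Fin n => x i)

@[simp] lemma listOf_length (x : ℕ → β) (n : ℕ) : (listOf x n).length = n := by
  simp [listOf]

lemma listOf_getD (d : β) (x : ℕ → β) {n i : ℕ} (h : i < n) : (listOf x n).getD i d = x i := by
  rw [List.getD_eq_getElem _ _ (by simpa using h)]
  simp [listOf]

lemma mem_cylP_listOf (d : β) (x : ℕ → β) (n : ℕ) : x ∈ cylP d (listOf x n) := by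
  intro i hi
  rw [listOf_getD d x (by simpa using hi)]

lemma cylP_nonempty (d : β) (l : List β) : (cylP d l).Nonempty :=
  ⟨fun i => l.getD i d, fun _ _ => rfl⟩

lemma getD_of_prefix (d : β) {l l' : List β} (h : l <+: l') {i : ℕ} (hi : i < l.length) :
    l'.getD i d = l.getD i d := by
  obtain ⟨t, rfl⟩ := h
  rw [List.getD_eq_getElem _ _ hi, List.getD_eq_getElem _ _ (by simp; omega),
    List.getElem_append_left hi]

lemma cylP_mono (d : β) {l l' : List β} (h : l <+: l') : cylP d l' ⊆ cylP d l := by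
  intro x hx i hi
  rw [← getD_of_prefix d h hi]
  exact hx i (lt_of_lt_of_le hi h.length_le)

lemma prefix_listOf {d : β} {l : List β} {x : ℕ → β} (hx : x ∈ cylP d l) {m : ℕ}
    (hm : l.length ≤ m) : l <+: listOf x m := by
  refine ⟨List.ofFn (fun i : Fin (m - l.length) => x (l.length + i)), ?_⟩
  apply List.ext_getElem (by simp; omega)
  intro i h1 h2
  simp only [listOf, List.getElem_ofFn]
  rcases lt_or_ge i l.length with h | h
  · rw [List.getElem_append_left h]
    have := hx i h
    rw [List.getD_eq_getElem _ _ h] at this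
    exact this.symm
  · rw [List.getElem_append_right h]
    simp only [List.getElem_ofFn]
    congr 1
    omega

lemma getD_append_self (d : β) (l : List β) (n : β) : (l ++ [n]).getD l.length d = n := by
  rw [List.getD_eq_getElem _ _ (by simp)]
  rw [List.getElem_append_right (le_refl _)]
  simp

lemma mem_cylP_append {d : β} {l : List β} {x : ℕ → β} (hx : x ∈ cylP d l) :
    x ∈ cylP d (l ++ [x l.length]) := by
  intro i hi
  simp only [List.length_append, List.length_singleton] at hi
  rcases lt_or_ge i l.length with h | h
  · rw [getD_of_prefix d ⟨[x l.length], rfl⟩ h]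
    exact hx i h
  · have : i = l.length := by omega
    subst this
    rw [getD_append_self]

/-! ### Meager helper lemmas -/

variable {α : Type*} [TopologicalSpace α]

lemma IsMeagre.union' {s t : Set α} (hs : IsMeagre s) (ht : IsMeagre t) : IsMeagre (s ∪ t) := by
  rw [IsMeagre, compl_union]
  exact inter_mem hs ht

lemma isMeagre_iUnion' {ι : Sort*} [Countable ι] {s : ι → Set α}
    (hs : ∀ i, IsMeagre (s i)) : IsMeagre (⋃ i, s i) := by
  rw [IsMeagre, compl_iUnion]
  exact countable_iInter_mem.mpr hs

lemma isMeagre_biUnion {ι : Type*} {T : Set ι} (hT : T.Countable) {s : ι → Set α}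
    (hs : ∀ i ∈ T, IsMeagre (s i)) : IsMeagre (⋃ i ∈ T, s i) := by
  rw [IsMeagre, compl_iUnion₂]
  exact (countable_bInter_mem hT).mpr hs

lemma not_isMeagre_of_isOpen [BaireSpace α] {O : Set α} (hO : IsOpen O) (hne : O.Nonempty) :
    ¬ IsMeagre O := by
  intro h
  have hd : Dense Oᶜ := dense_of_mem_residual h
  obtain ⟨x, hx1, hx2⟩ := hd.inter_open_nonempty O hO hne
  exact hx2 hx1

lemma diff_isMeagre_of_eventuallyEq {s O : Set α} (h : s =ᶠ[residual α] O) :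
    IsMeagre (s \ O) ∧ IsMeagre (O \ s) := by
  have hM : IsMeagre {x | (x ∈ s) = (x ∈ O)}ᶜ := by
    rw [IsMeagre, compl_compl]
    exact h
  constructor
  · refine hM.mono fun x hx => ?_
    simp only [mem_compl_iff, mem_setOf_eq, eq_iff_iff]
    intro hiff
    exact hx.2 (hiff.1 hx.1)
  · refine hM.mono fun x hx => ?_
    simp only [mem_compl_iff, mem_setOf_eq, eq_iff_iff]
    intro hiff
    exact hx.2 (hiff.2 hx.1)

/-- A nonmeager Baire-measurable set is comeager in some nonempty open set. -/
lemma exists_isOpen_diff_isMeagre [BaireSpace α] {T : Set α} (hT : BaireMeasurableSet T)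
    (h : ¬ IsMeagre T) : ∃ O : Set α, IsOpen O ∧ O.Nonempty ∧ IsMeagre (O \ T) := by
  obtain ⟨O, hO, heq⟩ := hT.residualEq_isOpen
  obtain ⟨h1, h2⟩ := diff_isMeagre_of_eventuallyEq heq
  refine ⟨O, hO, ?_, h2⟩
  rcases eq_empty_or_nonempty O with rfl | hne
  · exfalso
    apply h
    have : T ⊆ T \ ∅ := by simp
    exact h1.mono this
  · exact hne

/-! ### Baire hulls -/

/-- Every set has a "Baire hull". -/
lemma exists_baire_hull [SecondCountableTopology α] [BaireSpace α] (S : Set α) :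
    ∃ B, S ⊆ B ∧ BaireMeasurableSet B ∧
      ∀ C, BaireMeasurableSet C → S ⊆ C → C ⊆ B → IsMeagre (B \ C) := by
  classical
  set D : Set α := {x | ∀ U, IsOpen U → x ∈ U → ¬ IsMeagre (S ∩ U)} with hD
  have hDclosed : IsClosed D := by
    rw [← isOpen_compl_iff]
    rw [isOpen_iff_forall_mem_open]
    intro x hx
    simp only [hD, mem_compl_iff, mem_setOf_eq, not_forall] at hx
    obtain ⟨U, hU, hxU, hmeag⟩ := hx
    push_neg at hmeag
    refine ⟨U, fun y hy => ?_, hU, hxU⟩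
    simp only [mem_compl_iff, hD, mem_setOf_eq, not_forall]
    exact ⟨U, hU, hy, by push_neg; exact hmeag⟩
  have hSD : IsMeagre (S \ D) := by
    set b := TopologicalSpace.countableBasis α with hb
    set T : Set (Set α) := {U ∈ b | IsMeagre (S ∩ U)} with hT
    have hTc : T.Countable := (TopologicalSpace.countable_countableBasis α).mono (sep_subset _ _)
    have hsub : S \ D ⊆ ⋃ U ∈ T, (S ∩ U) := by
      intro x hx
      have : ¬ (∀ U, IsOpen U → x ∈ U → ¬ IsMeagre (S ∩ U)) := hx.2
      push_neg at this
      obtain ⟨U, hU, hxU, hmeag⟩ := this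
      obtain ⟨U', hU'b, hxU', hU'sub⟩ :=
        (TopologicalSpace.isBasis_countableBasis α).exists_subset_of_mem_open hxU hU
      refine mem_biUnion (show U' ∈ T from ⟨hU'b, hmeag.mono (by gcongr)⟩) ⟨hx.1, hxU'⟩
    exact (isMeagre_biUnion hTc (fun U hU => hU.2)).mono hsub
  refine ⟨D ∪ S, subset_union_right, ?_, ?_⟩
  · have : D ∪ S = D ∪ (S \ D) := by
      ext x; by_cases hx : x ∈ D <;> simp [hx]
    rw [this]
    exact ((hDclosed.isOpen_compl.baireMeasurableSet).of_compl).union hSD.baireMeasurableSet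
  · intro C hC hSC hCB
    by_contra hmeag
    have hsub : (D ∪ S) \ C ⊆ (D \ C) ∪ (S \ D) := by
      intro x hx
      rcases hx.1 with h | h
      · exact Or.inl ⟨h, hx.2⟩
      · by_cases hd : x ∈ D
        · exact Or.inl ⟨hd, hx.2⟩
        · exact Or.inr ⟨h, hd⟩
    have hDC : ¬ IsMeagre (D \ C) := by
      intro h
      exact hmeag ((IsMeagre.union' h hSD).mono hsub)
    have hDCbp : BaireMeasurableSet (D \ C) :=
      ((hDclosed.isOpen_compl.baireMeasurableSet).of_compl).diff hC
    obtain ⟨O, hO, hOne, hOmeag⟩ := exists_isOpen_diff_isMeagre hDCbp hDC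
    have hOx : (O ∩ (D \ C)).Nonempty := by
      by_contra hemp
      rw [not_nonempty_iff_eq_empty] at hemp
      apply not_isMeagre_of_isOpen hO hOne
      refine hOmeag.mono (s := O \ (D \ C)) (t := O) fun x hx => ⟨hx, fun hc => ?_⟩
      exact (eq_empty_iff_forall_notMem.1 hemp x) ⟨hx, hc⟩
    obtain ⟨x, hxO, hxD⟩ := hOx
    have hnm : ¬ IsMeagre (S ∩ O) := hxD.1 O hO hxO
    apply hnm
    have hCO : C ∩ O ⊆ O \ (D \ C) := fun y hy => ⟨hy.2, fun hd => hd.2 hy.1⟩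
    have : S ∩ O ⊆ O \ (D \ C) := fun y hy => hCO ⟨hSC hy.1, hy.2⟩
    exact hOmeag.mono this

/-! ### Analytic sets have the Baire property -/

section Analytic

variable {α : Type*} [MetricSpace α] [SecondCountableTopology α] [BaireSpace α]

lemma eq_of_mem_closure_images {f : (ℕ → ℕ) → α} (hf : Continuous f) {y : ℕ → ℕ} {x : α}
    (hx : ∀ n, x ∈ closure (f '' cylP 0 (listOf y n))) : x = f y := by
  have hchoice : ∀ n : ℕ, ∃ z ∈ cylP 0 (listOf y n), dist x (f z) < 1/(n+1) := by
    intro n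
    have h := hx n
    rw [Metric.mem_closure_iff] at h
    obtain ⟨b, hb, hdist⟩ := h (1/(n+1)) (by positivity)
    obtain ⟨z, hz, rfl⟩ := hb
    exact ⟨z, hz, hdist⟩
  choose z hz hdist using hchoice
  have h1 : Filter.Tendsto (fun n => f (z n)) Filter.atTop (𝓝 x) := by
    rw [tendsto_iff_dist_tendsto_zero]
    refine squeeze_zero (fun n => dist_nonneg) (fun n => ?_)
      tendsto_one_div_add_atTop_nhds_zero_nat
    rw [dist_comm]
    exact le_of_lt (hdist n)
  have h2 : Filter.Tendsto z Filter.atTop (𝓝 y) := by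
    rw [tendsto_pi_nhds]
    intro i
    refine tendsto_const_nhds.congr' ?_
    filter_upwards [Filter.eventually_ge_atTop (i+1)] with n hn
    have := hz n i (by simpa using Nat.lt_of_lt_of_le (Nat.lt_succ_self i) hn)
    rw [this, listOf_getD 0 y (by omega)]
  have h3 := (hf.tendsto y).comp h2
  exact tendsto_nhds_unique h1 h3

theorem analyticSet_baireMeasurableSet {s : Set α} (hs : MeasureTheory.AnalyticSet s) :
    BaireMeasurableSet s := by
  rw [MeasureTheory.AnalyticSet] at hs
  rcases hs with rfl | ⟨f, hf, rfl⟩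
  · exact isOpen_empty.baireMeasurableSet
  classical
  set S : List ℕ → Set α := fun l => f '' cylP 0 l with hS
  choose B₀ hSB₀ hbp₀ hhull₀ using fun l : List ℕ => exists_baire_hull (S l)
  set B : List ℕ → Set α :=
    fun l => (⋂ k ∈ Set.Iic l.length, B₀ (l.take k)) ∩ closure (S l) with hB
  have hSB : ∀ l, S l ⊆ B l := by
    intro l x hx
    refine ⟨mem_iInter₂.2 fun k _ => hSB₀ _ ?_, subset_closure hx⟩
    exact (image_mono (f := f) (cylP_mono 0 (List.take_prefix k l))) hx
  have hBcl : ∀ l, B l ⊆ closure (S l) := fun l => inter_subset_right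
  have hBbp : ∀ l, BaireMeasurableSet (B l) := by
    intro l
    refine BaireMeasurableSet.inter ?_
      (isClosed_closure.isOpen_compl.baireMeasurableSet.of_compl)
    exact BaireMeasurableSet.biInter (to_countable _) (fun k _ => hbp₀ _)
  have hBB₀ : ∀ l, B l ⊆ B₀ l := by
    intro l x hx
    have := (mem_iInter₂.1 hx.1) l.length (mem_Iic.2 (le_refl _))
    rwa [List.take_length] at this
  have hhull : ∀ l C, BaireMeasurableSet C → S l ⊆ C → C ⊆ B l → IsMeagre (B l \ C) := by
    intro l C hC h1 h2
    have h3 : IsMeagre (B₀ l \ ((C ∩ B₀ l) ∪ (B₀ l \ B l))) := by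
      refine hhull₀ l _ (((hC.inter (hbp₀ l))).union ((hbp₀ l).diff (hBbp l)))
        (fun x hx => Or.inl ⟨h1 hx, hSB₀ l hx⟩) ?_
      rintro x (hx | hx)
      exacts [hx.2, hx.1]
    refine h3.mono (s := B₀ l \ ((C ∩ B₀ l) ∪ (B₀ l \ B l))) (t := B l \ C) fun x hx => ⟨hBB₀ l hx.1, ?_⟩
    rintro (h | h)
    · exact hx.2 h.1
    · exact h.2 hx.1
  set M : List ℕ → Set α := fun l => B l \ ⋃ n, B (l ++ [n]) with hM
  have hMmeag : ∀ l, IsMeagre (M l) := by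
    intro l
    have hs1 : S l ⊆ (⋃ n, B (l ++ [n])) ∩ B l := by
      rintro x ⟨z, hz, rfl⟩
      exact ⟨mem_iUnion.2 ⟨z l.length, hSB _ ⟨z, mem_cylP_append hz, rfl⟩⟩, hSB l ⟨z, hz, rfl⟩⟩
    have := hhull l ((⋃ n, B (l ++ [n])) ∩ B l)
      ((BaireMeasurableSet.iUnion fun n => hBbp _).inter (hBbp l)) hs1 inter_subset_right
    exact this.mono (s := B l \ ((⋃ n, B (l ++ [n])) ∩ B l)) (t := M l) fun x hx => ⟨hx.1, fun hc => hx.2 hc.1⟩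
  have hkey : B [] \ (⋃ l : List ℕ, M l) ⊆ range f := by
    intro x hx
    obtain ⟨hxB, hxM⟩ := hx
    have hstep : ∀ l, x ∈ B l → ∃ n, x ∈ B (l ++ [n]) := by
      intro l hl
      by_contra h
      push_neg at h
      refine hxM (mem_iUnion.2 ⟨l, hl, fun hc => ?_⟩)
      obtain ⟨_, ⟨n, rfl⟩, hn⟩ := hc
      exact h n hn
    choose nx hnx using hstep
    obtain ⟨g, hg0, hgsucc⟩ : ∃ g : ℕ → {p : List ℕ // x ∈ B p},
        (g 0).1 = [] ∧ ∀ n, (g (n+1)).1 = (g n).1 ++ [nx (g n).1 (g n).2] :=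
      ⟨fun n => Nat.rec ⟨[], hxB⟩ (fun _ ih => ⟨ih.1 ++ [nx ih.1 ih.2], hnx ih.1 ih.2⟩) n,
        rfl, fun n => rfl⟩
    have hglen : ∀ n, (g n).1.length = n := by
      intro n
      induction n with
      | zero => rw [hg0]; rfl
      | succ n ih => rw [hgsucc]; simp [ih]
    have hgpre : ∀ m n, m ≤ n → (g m).1 <+: (g n).1 := by
      intro m n hmn
      induction n, hmn using Nat.le_induction with
      | base => exact List.prefix_refl _
      | succ n hmn ih => exact ih.trans ⟨_, (hgsucc n).symm⟩
    set y : ℕ → ℕ := fun i => (g (i+1)).1.getD i 0 with hy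
    have hgy : ∀ n, (g n).1 = listOf y n := by
      intro n
      apply List.ext_getElem (by simp [hglen])
      intro i h1 h2
      have hi : i < n := by rw [hglen] at h1; exact h1
      have hpre := hgpre (i+1) n hi
      have e1 : (listOf y n)[i] = y i := by simp [listOf]
      rw [e1, hy]
      have e2 : (g (i+1)).1.getD i 0 = (g n).1.getD i 0 :=
        (getD_of_prefix 0 hpre (by rw [hglen]; omega)).symm
      simp only [e2]
      rw [List.getD_eq_getElem _ _ (by rw [hglen]; exact hi)]
    have hfeq : x = f y := by
      refine eq_of_mem_closure_images hf fun n => ?_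
      have := hBcl _ (g n).2
      rwa [hgy n] at this
    exact ⟨y, hfeq.symm⟩
  have hrs : range f = S [] := by
    rw [hS]
    have : cylP (0:ℕ) [] = univ := by
      ext z; simp [cylP]
    simp [this]
  have hsub1 : range f ⊆ B [] := by rw [hrs]; exact hSB []
  have hdiff : IsMeagre (B [] \ range f) := by
    refine (isMeagre_iUnion' hMmeag).mono fun x hx => ?_
    by_contra h
    exact hx.2 (hkey ⟨hx.1, h⟩)
  have hfin : range f = B [] \ (B [] \ range f) := (diff_diff_cancel_left hsub1).symm
  rw [hfin]
  exact (hBbp []).diff hdiff.baireMeasurableSet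

end Analytic


/-! ### Cantor space topology -/

section Cantor

abbrev 𝒞 := ℕ → Bool

/-- cylinder of a finite Boolean string -/
abbrev cyl (l : List Bool) : Set 𝒞 := cylP false l

lemma isOpen_cyl (l : List Bool) : IsOpen (cyl l) := by
  have : cyl l = ⋂ i ∈ Finset.range l.length, {x : 𝒞 | x i = l.getD i false} := by
    ext x; simp [cylP]
  rw [this]
  refine isOpen_biInter_finset fun i _ => ?_
  have : {x : 𝒞 | x i = l.getD i false} = (fun x : 𝒞 => x i) ⁻¹' {l.getD i false} := rfl
  rw [this]
  exact (isOpen_discrete _).preimage (continuous_apply i)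

/-- basic nbhd basis lemma -/
lemma exists_cyl_subset {U : Set 𝒞} (hU : IsOpen U) {x : 𝒞} (hx : x ∈ U) :
    ∃ n, cyl (listOf x n) ⊆ U := by
  obtain ⟨I, u, hu, hsub⟩ := isOpen_pi_iff.1 hU x hx
  refine ⟨I.sup id + 1, fun y hy => hsub ?_⟩
  intro i hi
  have hxy : y i = x i := by
    have : i < I.sup id + 1 := Nat.lt_succ_of_le (Finset.le_sup (f := id) hi)
    rw [hy i (by simpa using this), listOf_getD false x this]
  rw [hxy]; exact (hu i hi).2

lemma exists_cyl_prod_subset {O : Set (𝒞 × 𝒞)} (hO : IsOpen O) {x y : 𝒞}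
    (hxy : (x, y) ∈ O) : ∃ n, cyl (listOf x n) ×ˢ cyl (listOf y n) ⊆ O := by
  obtain ⟨U, V, hU, hV, hxU, hyV, hsub⟩ := isOpen_prod_iff.1 hO x y hxy
  obtain ⟨n, hn⟩ := exists_cyl_subset hU hxU
  obtain ⟨m, hm⟩ := exists_cyl_subset hV hyV
  refine ⟨max n m, fun p hp => hsub ⟨?_, ?_⟩⟩
  · exact hn ((cylP_mono false (prefix_listOf (mem_cylP_listOf false x _) (by simp))) hp.1)
  · exact hm ((cylP_mono false (prefix_listOf (mem_cylP_listOf false y _) (by simp))) hp.2)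

/-- Shrink a box into a dense open set. -/
lemma shrink_into {W : Set (𝒞 × 𝒞)} (hWo : IsOpen W) (hWd : Dense W) (a b : List Bool) :
    ∃ a' b', a <+: a' ∧ b <+: b' ∧ cyl a' ×ˢ cyl b' ⊆ W := by
  have hbox : IsOpen (cyl a ×ˢ cyl b) := (isOpen_cyl a).prod (isOpen_cyl b)
  have hne : ((cyl a ×ˢ cyl b) ∩ W).Nonempty :=
    hWd.inter_open_nonempty _ hbox ((cylP_nonempty false a).prod (cylP_nonempty false b))
  obtain ⟨⟨x, y⟩, hmem, hW⟩ := hne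
  obtain ⟨n, hn⟩ := exists_cyl_prod_subset (hbox.inter hWo) ⟨hmem, hW⟩
  refine ⟨listOf x (max n a.length), listOf y (max n b.length),
    prefix_listOf hmem.1 (by simp), prefix_listOf hmem.2 (by simp), ?_⟩
  intro p hp
  have hp' : p ∈ cyl (listOf x n) ×ˢ cyl (listOf y n) := by
    constructor
    · exact (cylP_mono false (prefix_listOf (mem_cylP_listOf false x _) (by simp))) hp.1
    · exact (cylP_mono false (prefix_listOf (mem_cylP_listOf false y _) (by simp))) hp.2
  exact (hn hp').2

end Cantor

/-! ### Residual decompositions and localization -/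

lemma residual_seq {α : Type*} [TopologicalSpace α] {G : Set α} (hG : G ∈ residual α) :
    ∃ W : ℕ → Set α, (∀ k, IsOpen (W k) ∧ Dense (W k)) ∧ (∀ j k, j ≤ k → W k ⊆ W j) ∧
      (⋂ k, W k) ⊆ G := by
  rw [mem_residual_iff] at hG
  obtain ⟨Sc, hopen, hdense, hcount, hsub⟩ := hG
  obtain ⟨f, hf⟩ := (hcount.insert univ).exists_eq_range (insert_nonempty _ _)
  have hfod : ∀ j, IsOpen (f j) ∧ Dense (f j) := by
    intro j
    have : f j ∈ insert univ Sc := hf ▸ mem_range_self j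
    rcases mem_insert_iff.1 this with h | h
    · rw [h]; exact ⟨isOpen_univ, dense_univ⟩
    · exact ⟨hopen _ h, hdense _ h⟩
  refine ⟨fun k => ⋂ j ∈ Finset.range (k+1), f j, fun k => ⟨?_, ?_⟩, ?_, ?_⟩
  · exact isOpen_biInter_finset fun j _ => (hfod j).1
  · induction k with
    | zero => simpa using (hfod 0).2
    | succ k ih =>
      have : ⋂ j ∈ Finset.range (k+2), f j = f (k+1) ∩ ⋂ j ∈ Finset.range (k+1), f j := by
        rw [Finset.range_add_one, Finset.set_biInter_insert]
      show Dense (⋂ j ∈ Finset.range (k + 2), f j)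
      rw [this]
      exact Dense.inter_of_isOpen_left (hfod (k+1)).2 ih (hfod (k+1)).1
  · intro j k hjk
    intro x hx
    refine mem_iInter₂.2 fun i hi => mem_iInter₂.1 hx i ?_
    simp only [Finset.mem_range] at hi ⊢
    omega
  · refine subset_trans (fun x hx => ?_) hsub
    intro t ht
    have : t ∈ insert univ Sc := mem_insert_of_mem _ ht
    rw [hf] at this
    obtain ⟨j, rfl⟩ := this
    exact mem_iInter₂.1 (mem_iInter.1 hx j) j (Finset.self_mem_range_succ j)


/-! ### Localization -/

/-- `K S true = S`, `K S false = Sᶜ`. -/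
def K (S : Set (𝒞 × 𝒞)) (i : Bool) : Set (𝒞 × 𝒞) := if i then S else Sᶜ

lemma localization {S : Set (𝒞 × 𝒞)} (hS : BaireMeasurableSet S) (a b : List Bool) :
    ∃ (a' b' : List Bool) (i : Bool) (G : Set (𝒞 × 𝒞)), a <+: a' ∧ b <+: b' ∧
      G ∈ residual (𝒞 × 𝒞) ∧ G ∩ (cyl a' ×ˢ cyl b') ⊆ K S i := by
  have hbox : IsOpen (cyl a ×ˢ cyl b) := (isOpen_cyl a).prod (isOpen_cyl b)
  by_cases h : IsMeagre (S ∩ (cyl a ×ˢ cyl b))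
  · refine ⟨a, b, false, (S ∩ (cyl a ×ˢ cyl b))ᶜ, List.prefix_refl _, List.prefix_refl _, h, ?_⟩
    rintro p ⟨hpG, hpbox⟩ hpS
    exact hpG ⟨hpS, hpbox⟩
  · have hbp : BaireMeasurableSet (S ∩ (cyl a ×ˢ cyl b)) := hS.inter hbox.baireMeasurableSet
    obtain ⟨O, hOopen, hOne, hOmeag⟩ := exists_isOpen_diff_isMeagre hbp h
    have hOb : (O ∩ (cyl a ×ˢ cyl b)).Nonempty := by
      by_contra hemp
      rw [not_nonempty_iff_eq_empty] at hemp
      refine not_isMeagre_of_isOpen hOopen hOne (hOmeag.mono (s := O \ (S ∩ (cyl a ×ˢ cyl b))) (t := O) fun p hp => ⟨hp, fun hc => ?_⟩)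
      exact (eq_empty_iff_forall_notMem.1 hemp p) ⟨hp, hc.2⟩
    obtain ⟨⟨x, y⟩, hxO, hxb⟩ := hOb
    obtain ⟨n, hn⟩ := exists_cyl_prod_subset (hOopen.inter hbox) ⟨hxO, hxb⟩
    refine ⟨listOf x (max n a.length), listOf y (max n b.length), true,
      (O \ (S ∩ (cyl a ×ˢ cyl b)))ᶜ, prefix_listOf hxb.1 (by simp),
      prefix_listOf hxb.2 (by simp), hOmeag, ?_⟩
    rintro p ⟨hpG, hpbox⟩
    have hp' : p ∈ cyl (listOf x n) ×ˢ cyl (listOf y n) := by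
      constructor
      · exact (cylP_mono false (prefix_listOf (mem_cylP_listOf false x _) (by simp))) hpbox.1
      · exact (cylP_mono false (prefix_listOf (mem_cylP_listOf false y _) (by simp))) hpbox.2
    have hpO : p ∈ O ∩ (cyl a ×ˢ cyl b) := hn hp'
    have : p ∈ S ∩ (cyl a ×ˢ cyl b) := by
      by_contra hc
      exact hpG ⟨hpO.1, hc⟩
    simpa [K] using this.1

/-- Full data for a splitting node: extended children strings, a decision, and a
decreasing sequence of dense open sets controlling the pair. -/
lemma node_step {S : Set (𝒞 × 𝒞)} (hS : BaireMeasurableSet S) (c : List Bool) :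
    ∃ (a b : List Bool) (i : Bool) (W : ℕ → Set (𝒞 × 𝒞)),
      (c ++ [false]) <+: a ∧ (c ++ [true]) <+: b ∧
      (∀ k, IsOpen (W k) ∧ Dense (W k)) ∧ (∀ j k, j ≤ k → W k ⊆ W j) ∧
      (∀ p : 𝒞 × 𝒞, (∀ k, p ∈ W k) → p ∈ cyl a ×ˢ cyl b → p ∈ K S i) := by
  obtain ⟨a, b, i, G, ha, hb, hG, hsub⟩ := localization hS (c ++ [false]) (c ++ [true])
  obtain ⟨W, hWod, hWdec, hWG⟩ := residual_seq hG
  refine ⟨a, b, i, W, ha, hb, hWod, hWdec, fun p hp hpbox => ?_⟩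
  exact hsub ⟨hWG (mem_iInter.2 hp), hpbox⟩


/-! ### Tree utilities -/

lemma listOf_succ {β : Type*} (x : ℕ → β) (n : ℕ) : listOf x (n+1) = listOf x n ++ [x n] := by
  apply List.ext_getElem (by simp)
  intro i h1 h2
  simp only [listOf, List.getElem_ofFn]
  rcases lt_or_ge i n with h | h
  · rw [List.getElem_append_left (by simpa using h)]
    simp [listOf]
  · have : i = n := by simp at h1; omega
    subst this
    rw [List.getElem_append_right (by simp)]
    simp [listOf]

lemma listOf_prefix_listOf {β : Type*} (d : β) (x : ℕ → β) {a b : ℕ} (h : a ≤ b) :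
    listOf x a <+: listOf x b :=
  prefix_listOf (mem_cylP_listOf d x a) (by simpa using h)

lemma listOf_eq_of_mem_cylP {β : Type*} {d : β} {l : List β} {x : ℕ → β} (hx : x ∈ cylP d l) :
    listOf x l.length = l := by
  apply List.ext_getElem (by simp)
  intro i h1 h2
  simp only [listOf, List.getElem_ofFn]
  rw [hx i h2, List.getD_eq_getElem _ _ h2]

lemma prefix_concat_cases {β : Type*} {s t : List β} {a : β} (h : s <+: t ++ [a]) :
    s = t ++ [a] ∨ s <+: t := by
  rcases le_or_gt s.length t.length with hl | hl
  · exact Or.inr (List.prefix_of_prefix_length_le h ⟨[a], rfl⟩ hl)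
  · left
    refine List.IsPrefix.eq_of_length h ?_
    have := h.length_le
    simp at this ⊢
    omega

lemma split_unique {u₁ u₂ s t : List Bool} (h1s : (u₁ ++ [false]) <+: s)
    (h1t : (u₁ ++ [true]) <+: t) (h2s : (u₂ ++ [false]) <+: s)
    (h2t : (u₂ ++ [true]) <+: t) : u₁ = u₂ := by
  have key : ∀ u₁ u₂ : List Bool, u₁.length < u₂.length →
      (u₁ ++ [false]) <+: s → (u₁ ++ [true]) <+: t →
      (u₂ ++ [false]) <+: s → (u₂ ++ [true]) <+: t → False := by
    intro u₁ u₂ hlen h1s h1t h2s h2t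
    have hps : (u₁ ++ [false]) <+: u₂ := by
      have h' : (u₁ ++ [false]) <+: (u₂ ++ [false]) :=
        List.prefix_of_prefix_length_le h1s h2s (by simp; omega)
      rcases prefix_concat_cases h' with h | h
      · exfalso; have := congrArg List.length h; simp at this; omega
      · exact h
    have hpt : (u₁ ++ [true]) <+: u₂ := by
      have h' : (u₁ ++ [true]) <+: (u₂ ++ [true]) :=
        List.prefix_of_prefix_length_le h1t h2t (by simp; omega)
      rcases prefix_concat_cases h' with h | h
      · exfalso; have := congrArg List.length h; simp at this; omega
      · exact h
    have e1 : u₂.getD u₁.length false = false := by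
      rw [getD_of_prefix false hps (by simp), getD_append_self]
    have e2 : u₂.getD u₁.length false = true := by
      rw [getD_of_prefix false hpt (by simp), getD_append_self]
    rw [e1] at e2
    exact Bool.false_ne_true e2
  rcases lt_trichotomy u₁.length u₂.length with h | h | h
  · exact absurd (key u₁ u₂ h h1s h1t h2s h2t) not_false
  · have h' : (u₁ ++ [false]) <+: (u₂ ++ [false]) :=
      List.prefix_of_prefix_length_le h1s h2s (by simp; omega)
    have := List.IsPrefix.eq_of_length h' (by simp; omega)
    simpa using this
  · exact absurd (key u₂ u₁ h h2s h2t h1s h1t) not_false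

/-- all boolean lists of length `n` -/
def allLists : ℕ → List (List Bool)
  | 0 => [[]]
  | n+1 => ((allLists n).map (· ++ [false])) ++ ((allLists n).map (· ++ [true]))

lemma mem_allLists {n : ℕ} {l : List Bool} : l ∈ allLists n ↔ l.length = n := by
  induction n generalizing l with
  | zero => simp [allLists, List.length_eq_zero_iff]
  | succ n ih =>
    simp only [allLists, List.mem_append, List.mem_map]
    constructor
    · rintro (⟨a, ha, rfl⟩ | ⟨a, ha, rfl⟩) <;> simp [ih.1 ha]
    · intro hl
      rcases List.eq_nil_or_concat l with rfl | ⟨l', a, rfl⟩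
      · simp at hl
      · rw [List.concat_eq_append] at hl ⊢
        cases a
        · exact Or.inl ⟨l', ih.2 (by simp at hl; omega), rfl⟩
        · exact Or.inr ⟨l', ih.2 (by simp at hl; omega), rfl⟩

/-! ### Chains and branch maps -/

lemma chain_of_step {F : List Bool → List Bool}
    (hF : ∀ u i, F u ++ [i] <+: F (u ++ [i])) : ∀ {s t}, s <+: t → F s <+: F t := by
  intro s t
  induction t using List.reverseRecOn with
  | nil =>
    intro h
    rw [List.prefix_nil.1 h]
  | append_singleton t a ih =>
    intro h
    rcases prefix_concat_cases h with rfl | h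
    · exact List.prefix_refl _
    · exact (ih h).trans (((F t).prefix_concat a).trans (by simpa using hF t a))

lemma growth_of_step {F : List Bool → List Bool}
    (hF : ∀ u i, F u ++ [i] <+: F (u ++ [i])) : ∀ s : List Bool, s.length ≤ (F s).length := by
  intro s
  induction s using List.reverseRecOn with
  | nil => simp
  | append_singleton t a ih =>
    have := (hF t a).length_le
    simp at this ⊢
    omega

/-- The branch map of a tree-scheme. -/
def branchMap (F : List Bool → List Bool) (x : 𝒞) : 𝒞 :=
  fun i => (F (listOf x (i+1))).getD i false

lemma branchMap_getD {F : List Bool → List Bool}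
    (hF : ∀ u i, F u ++ [i] <+: F (u ++ [i])) (x : 𝒞) (n : ℕ) {i : ℕ}
    (hi : i < (F (listOf x n)).length) :
    branchMap F x i = (F (listOf x n)).getD i false := by
  rcases le_or_gt (i+1) n with h | h
  · have hpre : F (listOf x (i+1)) <+: F (listOf x n) :=
      chain_of_step hF (listOf_prefix_listOf false x h)
    rw [branchMap]
    exact (getD_of_prefix false hpre (lt_of_lt_of_le (Nat.lt_succ_self i)
      (by simpa using growth_of_step hF (listOf x (i+1))))).symm
  · have hpre : F (listOf x n) <+: F (listOf x (i+1)) :=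
      chain_of_step hF (listOf_prefix_listOf false x (by omega))
    rw [branchMap]
    exact getD_of_prefix false hpre hi

lemma branchMap_mem {F : List Bool → List Bool}
    (hF : ∀ u i, F u ++ [i] <+: F (u ++ [i])) (x : 𝒞) (n : ℕ) :
    branchMap F x ∈ cyl (F (listOf x n)) :=
  fun _ hi => branchMap_getD hF x n hi

lemma listOf_branchMap {F : List Bool → List Bool}
    (hF : ∀ u i, F u ++ [i] <+: F (u ++ [i])) (x : 𝒞) (n : ℕ) :
    listOf (branchMap F x) ((F (listOf x n)).length) = F (listOf x n) :=
  listOf_eq_of_mem_cylP (branchMap_mem hF x n)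

lemma branchMap_apply_eq {F : List Bool → List Bool}
    (hF : ∀ u i, F u ++ [i] <+: F (u ++ [i])) (x : 𝒞) (k : ℕ) :
    branchMap F x ((F (listOf x k)).length) = x k := by
  have hpre : F (listOf x k) ++ [x k] <+: F (listOf x (k+1)) := by
    have := hF (listOf x k) (x k)
    rwa [← listOf_succ] at this
  have hi : (F (listOf x k)).length < (F (listOf x (k+1))).length :=
    lt_of_lt_of_le (by simp) hpre.length_le
  rw [branchMap_getD hF x (k+1) hi, getD_of_prefix false hpre (by simp), getD_append_self]

lemma branchMap_continuous (F : List Bool → List Bool) : Continuous (branchMap F) := by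
  apply continuous_pi
  intro i
  rw [continuous_def]
  intro U _
  rw [isOpen_iff_forall_mem_open]
  intro x hx
  refine ⟨cyl (listOf x (i+1)), fun z hz => ?_, isOpen_cyl _, mem_cylP_listOf false x (i+1)⟩
  have : listOf z (i+1) = listOf x (i+1) := by
    have := listOf_eq_of_mem_cylP hz
    rwa [listOf_length] at this
  show branchMap F z i ∈ U
  rw [branchMap, this]
  exact hx

lemma branchMap_ne {F : List Bool → List Bool}
    (hF : ∀ u i, F u ++ [i] <+: F (u ++ [i])) {x y : 𝒞} {k : ℕ}
    (hxy : listOf x k = listOf y k) (hne : x k ≠ y k) : branchMap F x ≠ branchMap F y := by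
  intro h
  apply hne
  have e1 := branchMap_apply_eq hF x k
  have e2 := branchMap_apply_eq hF y k
  rw [← e1, ← e2, ← hxy, h]

/-- least disagreement point of two distinct branches -/
lemma exists_first_diff {x y : 𝒞} (h : x ≠ y) :
    ∃ k, listOf x k = listOf y k ∧ x k ≠ y k := by
  have hex : ∃ k, x k ≠ y k := by
    by_contra hc
    push_neg at hc
    exact h (funext hc)
  classical
  refine ⟨Nat.find hex, ?_, Nat.find_spec hex⟩
  apply List.ext_getElem (by simp)
  intro i h1 h2
  simp only [listOf, List.getElem_ofFn]
  have : ¬ (x i ≠ y i) := Nat.find_min hex (by simpa using h1)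
  push_neg at this
  exact this


/-! ### The fusion construction -/

lemma multi_shrink (pairs : List (List Bool × List Bool)) :
    ∀ (σ : List Bool → List Bool), (∀ p ∈ pairs, p.1 ≠ p.2) →
    ∀ (Wt : List Bool × List Bool → Set (𝒞 × 𝒞)),
      (∀ p ∈ pairs, IsOpen (Wt p) ∧ Dense (Wt p)) →
    ∃ σ' : List Bool → List Bool, (∀ s, σ s <+: σ' s) ∧
      (∀ p ∈ pairs, cyl (σ' p.1) ×ˢ cyl (σ' p.2) ⊆ Wt p) ∧
      (∀ s, (∀ p ∈ pairs, p.1 ≠ s ∧ p.2 ≠ s) → σ' s = σ s) := by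
  classical
  induction pairs with
  | nil => exact fun σ _ Wt _ => ⟨σ, fun s => List.prefix_refl _, by simp, fun s _ => rfl⟩
  | cons hd tl ih =>
    intro σ hne Wt hW
    obtain ⟨a', b', ha, hb, hbox⟩ :=
      shrink_into (hW hd (by simp)).1 (hW hd (by simp)).2 (σ hd.1) (σ hd.2)
    have hd12 : hd.1 ≠ hd.2 := hne hd (by simp)
    set σ₁ := Function.update (Function.update σ hd.1 a') hd.2 b' with hσ₁
    have hσ₁1 : σ₁ hd.1 = a' := by
      rw [hσ₁, Function.update_of_ne hd12, Function.update_self]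
    have hσ₁2 : σ₁ hd.2 = b' := by rw [hσ₁, Function.update_self]
    have hσ₁pre : ∀ s, σ s <+: σ₁ s := by
      intro s
      rw [hσ₁]
      by_cases h2 : s = hd.2
      · subst h2; rw [Function.update_self]; exact hb
      · rw [Function.update_of_ne h2]
        by_cases h1 : s = hd.1
        · subst h1; rw [Function.update_self]; exact ha
        · rw [Function.update_of_ne h1]
    obtain ⟨σ', h1, h2, h3⟩ := ih σ₁ (fun p hp => hne p (by simp [hp])) Wt
      (fun p hp => hW p (by simp [hp]))
    refine ⟨σ', fun s => (hσ₁pre s).trans (h1 s), ?_, ?_⟩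
    · intro p hp
      rcases List.mem_cons.1 hp with rfl | hp
      · intro q hq
        refine hbox ⟨?_, ?_⟩
        · exact (cylP_mono false (hσ₁1 ▸ h1 p.1)) hq.1
        · exact (cylP_mono false (hσ₁2 ▸ h1 p.2)) hq.2
      · exact h2 p hp
    · intro s hs
      rw [h3 s (fun p hp => hs p (by simp [hp])), hσ₁,
        Function.update_of_ne (Ne.symm (hs hd (by simp)).2),
        Function.update_of_ne (Ne.symm (hs hd (by simp)).1)]

section Fusion

variable {S : Set (𝒞 × 𝒞)}

/-- One stage of the fusion construction. -/
lemma step_exists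
    (chF chT : List Bool → List Bool) (Wf : List Bool → ℕ → Set (𝒞 × 𝒞))
    (hWod : ∀ c k, IsOpen (Wf c k) ∧ Dense (Wf c k))
    (n : ℕ) (σ : List Bool → List Bool) :
    ∃ σ' : List Bool → List Bool,
      (∀ s, s.length ≠ n+1 → σ' s = σ s) ∧
      (∀ u, u.length = n →
        (chF (σ u) <+: σ' (u ++ [false])) ∧ (chT (σ u) <+: σ' (u ++ [true]))) ∧
      (∀ s t u : List Bool, s.length = n+1 → t.length = n+1 →
        (u ++ [false]) <+: s → (u ++ [true]) <+: t →
        cyl (σ' s) ×ˢ cyl (σ' t) ⊆ Wf (σ u) n) := by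
  classical
  set σ₀ : List Bool → List Bool := fun s =>
    if s.length = n+1 then
      (if s.getLastD false then chT (σ s.dropLast) else chF (σ s.dropLast))
    else σ s with hσ₀
  have hσ₀low : ∀ s, s.length ≠ n+1 → σ₀ s = σ s := by
    intro s h; rw [hσ₀]; simp [h]
  have hσ₀child : ∀ u, u.length = n → ∀ i : Bool,
      σ₀ (u ++ [i]) = (bif i then chT (σ u) else chF (σ u)) := by
    intro u hu i
    rw [hσ₀]
    have h1 : (u ++ [i]).length = n + 1 := by simp [hu]
    have h2 : (u ++ [i]).getLastD false = i := by simp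
    have h3 : (u ++ [i]).dropLast = u := by simp
    have e : σ₀ (u ++ [i]) = if (u ++ [i]).length = n+1 then
        (if (u ++ [i]).getLastD false then chT (σ (u ++ [i]).dropLast)
         else chF (σ (u ++ [i]).dropLast)) else σ (u ++ [i]) := rfl
    show σ₀ (u ++ [i]) = bif i then chT (σ u) else chF (σ u)
    rw [e, if_pos h1, h2, h3]
    cases i <;> rfl
  set pairs : List (List Bool × List Bool) :=
    ((allLists (n+1)).product (allLists (n+1))).filter (fun p => !(p.1 == p.2)) with hpairs
  have hmem_pairs : ∀ p : List Bool × List Bool,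
      p ∈ pairs ↔ p.1.length = n+1 ∧ p.2.length = n+1 ∧ p.1 ≠ p.2 := by
    intro p
    obtain ⟨p1, p2⟩ := p
    rw [hpairs, List.mem_filter]
    simp only [List.pair_mem_product, mem_allLists, Bool.not_eq_true', beq_eq_false_iff_ne,
      ne_eq]
    tauto
  set Wt : List Bool × List Bool → Set (𝒞 × 𝒞) := fun p =>
    if h : ∃ u, (u ++ [false]) <+: p.1 ∧ (u ++ [true]) <+: p.2
    then Wf (σ h.choose) n else univ with hWt
  have hWtgood : ∀ p ∈ pairs, IsOpen (Wt p) ∧ Dense (Wt p) := by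
    intro p _
    have e : Wt p = if h : ∃ u, (u ++ [false]) <+: p.1 ∧ (u ++ [true]) <+: p.2
        then Wf (σ h.choose) n else univ := rfl
    rw [e]
    split
    · exact hWod _ n
    · exact ⟨isOpen_univ, dense_univ⟩
  obtain ⟨σ', h1, h2, h3⟩ := multi_shrink pairs σ₀
    (fun p hp => ((hmem_pairs p).1 hp).2.2) Wt hWtgood
  refine ⟨σ', ?_, ?_, ?_⟩
  · intro s hs
    rw [h3 s, hσ₀low s hs]
    intro p hp
    have := (hmem_pairs p).1 hp
    constructor
    · intro h; rw [h] at this; exact hs this.1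
    · intro h; rw [h] at this; exact hs this.2.1
  · intro u hu
    constructor
    · have := h1 (u ++ [false])
      rw [hσ₀child u hu false] at this
      exact this
    · have := h1 (u ++ [true])
      rw [hσ₀child u hu true] at this
      exact this
  · intro s t u hs ht hus hut
    have hst : s ≠ t := by
      intro h
      subst h
      have e1 : s.getD u.length false = false := by
        rw [getD_of_prefix false hus (by simp), getD_append_self]
      have e2 : s.getD u.length false = true := by
        rw [getD_of_prefix false hut (by simp), getD_append_self]
      rw [e1] at e2
      exact Bool.false_ne_true e2
    have hp : (s, t) ∈ pairs := (hmem_pairs (s, t)).2 ⟨hs, ht, hst⟩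
    have := h2 (s, t) hp
    have hWteq : Wt (s, t) = Wf (σ u) n := by
      have hex : ∃ v, (v ++ [false]) <+: s ∧ (v ++ [true]) <+: t := ⟨u, hus, hut⟩
      have e : Wt (s, t) = if h : ∃ v, (v ++ [false]) <+: s ∧ (v ++ [true]) <+: t
          then Wf (σ h.choose) n else univ := rfl
      rw [e, dif_pos hex]
      have : hex.choose = u := split_unique hex.choose_spec.1 hex.choose_spec.2 hus hut
      rw [this]
    rwa [hWteq] at this

end Fusion


/-- The full fusion scheme: a Cantor scheme all whose pairs of branches are colored
according to the decision at their splitting node. -/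
lemma exists_scheme {S : Set (𝒞 × 𝒞)} (hS : BaireMeasurableSet S) :
    ∃ (σ : List Bool → List Bool) (d : List Bool → Bool),
      (∀ u i, σ u ++ [i] <+: σ (u ++ [i])) ∧
      (∀ x y : 𝒞, ∀ k, listOf x k = listOf y k → x k = false → y k = true →
        (branchMap σ x, branchMap σ y) ∈ K S (d (listOf x k))) := by
  classical
  choose chF chT dec Wf hchF hchT hWod hWdec hWK using fun c => node_step hS c
  choose step hlow hchild hpairs using step_exists chF chT Wf hWod
  obtain ⟨Φ, hΦ0, hΦs⟩ : ∃ Φ : ℕ → List Bool → List Bool,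
      Φ 0 = (fun _ => []) ∧ ∀ n, Φ (n+1) = step n (Φ n) :=
    ⟨fun n => Nat.rec (fun _ => []) (fun n ih => step n ih) n, rfl, fun n => rfl⟩
  set σ : List Bool → List Bool := fun s => Φ s.length s with hσ
  have hstab : ∀ (s : List Bool) (m : ℕ), s.length ≤ m → Φ m s = σ s := by
    intro s m hm
    induction m, hm using Nat.le_induction with
    | base => rfl
    | succ m hm ih => rw [hΦs m, hlow m (Φ m) s (by omega), ih]
  have hchild' : ∀ u : List Bool,
      (chF (σ u) <+: σ (u ++ [false])) ∧ (chT (σ u) <+: σ (u ++ [true])) := by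
    intro u
    have h := hchild u.length (Φ u.length) u rfl
    have e0 : Φ u.length u = σ u := rfl
    have e1 : step u.length (Φ u.length) (u ++ [false]) = σ (u ++ [false]) := by
      rw [← hΦs]
      exact hstab _ _ (by simp)
    have e2 : step u.length (Φ u.length) (u ++ [true]) = σ (u ++ [true]) := by
      rw [← hΦs]
      exact hstab _ _ (by simp)
    rw [e0, e1, e2] at h
    exact h
  have hstep : ∀ u i, σ u ++ [i] <+: σ (u ++ [i]) := by
    intro u i
    cases i
    · exact (hchF (σ u)).trans (hchild' u).1
    · exact (hchT (σ u)).trans (hchild' u).2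
  have hpairs' : ∀ (u s t : List Bool) (m : ℕ), s.length = m → t.length = m →
      (u ++ [false]) <+: s → (u ++ [true]) <+: t →
      cyl (σ s) ×ˢ cyl (σ t) ⊆ Wf (σ u) (m - 1) := by
    intro u s t m hs ht hus hut
    have hul : u.length + 1 ≤ m := by
      have := hus.length_le
      simp [hs] at this
      omega
    obtain ⟨n, rfl⟩ : ∃ n, m = n + 1 := ⟨m - 1, by omega⟩
    have h := hpairs n (Φ n) s t u hs ht hus hut
    rw [← hΦs n, hstab s (n+1) (by omega), hstab t (n+1) (by omega)] at h
    rw [hstab u n (by omega)] at h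
    simpa using h
  refine ⟨σ, fun v => dec (σ v), hstep, ?_⟩
  intro x y k hlk hx hy
  have hWall : ∀ j, (branchMap σ x, branchMap σ y) ∈ Wf (σ (listOf x k)) j := by
    intro j
    set m := max (j + 1) (k + 1) with hm
    have h1 : (listOf x k ++ [false]) <+: listOf x m := by
      rw [← hx, ← listOf_succ]
      exact listOf_prefix_listOf false x (by omega)
    have h2 : (listOf x k ++ [true]) <+: listOf y m := by
      rw [hlk, ← hy, ← listOf_succ]
      exact listOf_prefix_listOf false y (by omega)
    have hbox := hpairs' (listOf x k) (listOf x m) (listOf y m) m (by simp) (by simp) h1 h2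
    have hmem := hbox (Set.mk_mem_prod (branchMap_mem hstep x m) (branchMap_mem hstep y m))
    exact hWdec (σ (listOf x k)) j (m - 1) (by omega) hmem
  apply hWK (σ (listOf x k)) (branchMap σ x, branchMap σ y) hWall
  refine Set.mk_mem_prod ?_ ?_
  · have e : listOf x k ++ [false] = listOf x (k+1) := by rw [← hx, ← listOf_succ]
    refine (cylP_mono false (hchild' (listOf x k)).1) ?_
    rw [e]
    exact branchMap_mem hstep x (k+1)
  · have e : listOf x k ++ [true] = listOf y (k+1) := by rw [hlk, ← hy, ← listOf_succ]
    refine (cylP_mono false (hchild' (listOf x k)).2) ?_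
    rw [e]
    exact branchMap_mem hstep y (k+1)


/-! ### Monochromatic subtree extraction -/

lemma prefix_append_singleton (l : List Bool) (a : Bool) : l <+: l ++ [a] := ⟨[a], rfl⟩

lemma exists_mono (d : List Bool → Bool) :
    ∃ (e : List Bool → List Bool) (c : Bool),
      (∀ s i, e s ++ [i] <+: e (s ++ [i])) ∧ (∀ s, d (e s) = c) := by
  classical
  by_cases h : ∃ u : List Bool, ∀ v, u <+: v → ∃ w, v <+: w ∧ d w = true
  · obtain ⟨u, hu⟩ := h
    set pick : List Bool → List Bool := fun v =>
      if h : ∃ w, v <+: w ∧ d w = true then h.choose else v with hpick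
    have hpick_spec : ∀ v, u <+: v → (v <+: pick v ∧ d (pick v) = true) := by
      intro v hv
      have hx := hu v hv
      have e : pick v = if h : ∃ w, v <+: w ∧ d w = true then h.choose else v := rfl
      rw [e, dif_pos hx]
      exact hx.choose_spec
    set e : List Bool → List Bool :=
      fun s => s.foldl (fun acc i => pick (acc ++ [i])) (pick u) with he
    have hestep : ∀ s i, e (s ++ [i]) = pick (e s ++ [i]) := by
      intro s i
      rw [he]
      simp [List.foldl_append]
    have heinv : ∀ s, u <+: e s ∧ d (e s) = true := by
      intro s
      induction s using List.reverseRecOn with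
      | nil =>
        have e0 : e [] = pick u := rfl
        rw [e0]
        exact ⟨(hpick_spec u (List.prefix_refl u)).1, (hpick_spec u (List.prefix_refl u)).2⟩
      | append_singleton s i ih =>
        rw [hestep]
        have hu2 : u <+: e s ++ [i] := ih.1.trans (prefix_append_singleton _ _)
        exact ⟨hu2.trans (hpick_spec _ hu2).1, (hpick_spec _ hu2).2⟩
    refine ⟨e, true, ?_, fun s => (heinv s).2⟩
    intro s i
    rw [hestep]
    exact (hpick_spec _ ((heinv s).1.trans (prefix_append_singleton _ _))).1
  · push_neg at h
    obtain ⟨v, -, hv⟩ := h []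
    refine ⟨fun s => v ++ s, false, ?_, ?_⟩
    · intro s i
      rw [List.append_assoc]
    · intro s
      have := hv (v ++ s) ⟨s, rfl⟩
      simpa using this

/-! ### Ranges of injective continuous self-maps of Cantor space are perfect -/

lemma perfect_range {F : 𝒞 → 𝒞} (hc : Continuous F) (hinj : Function.Injective F) :
    Perfect (range F) ∧ (range F).Nonempty := by
  refine ⟨⟨(isCompact_range hc).isClosed, ?_⟩, ⟨F (fun _ => false), mem_range_self _⟩⟩
  intro x hx
  rw [accPt_iff_nhds]
  intro U hU
  obtain ⟨z, rfl⟩ := hx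
  have hopen : IsOpen (F ⁻¹' interior U) := isOpen_interior.preimage hc
  have hz : z ∈ F ⁻¹' interior U := mem_interior_iff_mem_nhds.2 hU
  obtain ⟨n, hn⟩ := exists_cyl_subset hopen hz
  set z' := Function.update z n (!z n) with hz'
  have hz'mem : z' ∈ cyl (listOf z n) := by
    intro i hi
    simp only [listOf_length] at hi
    rw [hz', Function.update_of_ne (by omega : i ≠ n)]
    exact mem_cylP_listOf false z n i (by simpa using hi)
  refine ⟨F z', ⟨interior_subset (hn hz'mem), mem_range_self _⟩, ?_⟩
  intro heq
  have h1 := hinj heq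
  have h2 : z' n = z n := by rw [h1]
  rw [hz', Function.update_self] at h2
  simp at h2

end GalvinAux

open GalvinAux Set

/-- (Galvin dichotomy, Corollary of Galvin's Ramsey theorem.) Let `R` be an
analytic symmetric binary relation on a Polish space `X`, let `η : 2^ω → X` be
continuous and let `P ⊆ 2^ω` be nonempty and perfect. Then there is a nonempty
perfect `Q ⊆ P` such that `η(Q)` is either `R`-complete or `R`-discrete. -/
theorem galvin_dichotomy {X : Type*} [TopologicalSpace X] [PolishSpace X]
    (R : Set (X × X)) (hR : MeasureTheory.AnalyticSet R)
    (hsym : ∀ a b : X, (a, b) ∈ R → (b, a) ∈ R)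
    (η : (ℕ → Bool) → X) (hη : Continuous η)
    (P : Set (ℕ → Bool)) (hP : Perfect P) (hPne : P.Nonempty) :
    ∃ Q, Q ⊆ P ∧ Perfect Q ∧ Q.Nonempty ∧
      ((∀ a ∈ η '' Q, ∀ b ∈ η '' Q, a ≠ b → (a, b) ∈ R) ∨
       (∀ a ∈ η '' Q, ∀ b ∈ η '' Q, a ≠ b → (a, b) ∉ R)) := by
  classical
  obtain ⟨f, hfP, hfc, hfi⟩ : ∃ f : (ℕ → Bool) → (ℕ → Bool),
      range f ⊆ P ∧ Continuous f ∧ Function.Injective f := by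
    letI := TopologicalSpace.upgradeIsCompletelyMetrizable (ℕ → Bool)
    exact hP.exists_nat_bool_injection hPne
  set η' : 𝒞 → X := fun x => η (f x) with hη'
  have hη'c : Continuous η' := hη.comp hfc
  set S : Set (𝒞 × 𝒞) := (fun p : 𝒞 × 𝒞 => (η' p.1, η' p.2)) ⁻¹' R with hSdef
  have hSanal : MeasureTheory.AnalyticSet S := by
    haveI : TopologicalSpace.IsCompletelyMetrizableSpace (𝒞 × 𝒞) := inferInstance
    exact hR.preimage ((hη'c.comp continuous_fst).prodMk (hη'c.comp continuous_snd))
  have hSbp : BaireMeasurableSet S := by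
    letI := TopologicalSpace.upgradeIsCompletelyMetrizable (𝒞 × 𝒞)
    exact analyticSet_baireMeasurableSet hSanal
  obtain ⟨σ, d, hstep, hpair⟩ := exists_scheme hSbp
  obtain ⟨e, c, hestep, hec⟩ := exists_mono d
  set et := branchMap e with het
  set g := branchMap σ with hg
  have main : ∀ x y : 𝒞, ∀ k, listOf x k = listOf y k → x k = false → y k = true →
      (g (et x), g (et y)) ∈ K S c := by
    intro x y k hlk hx hy
    set u := listOf x k with hu
    set k' := (e u).length with hk'
    have h1x : listOf (et x) k' = e u := listOf_branchMap hestep x k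
    have h1y : listOf (et y) k' = e u := by
      have h := listOf_branchMap hestep y k
      rw [← hlk] at h
      exact h
    have hvalx : et x k' = x k := by
      have hpre : e u ++ [x k] <+: e (listOf x (k+1)) := by
        have h := hestep u (x k)
        rwa [← listOf_succ] at h
      have hi : k' < (e (listOf x (k+1))).length :=
        lt_of_lt_of_le (by simp [hk']) hpre.length_le
      calc et x k' = (e (listOf x (k+1))).getD k' false := branchMap_getD hestep x (k+1) hi
        _ = (e u ++ [x k]).getD k' false := getD_of_prefix false hpre (by simp [hk'])
        _ = x k := getD_append_self false (e u) (x k)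
    have hvaly : et y k' = y k := by
      have hpre : e u ++ [y k] <+: e (listOf y (k+1)) := by
        have e1 : listOf y k = u := hlk.symm
        have h := hestep (listOf y k) (y k)
        rw [e1] at h
        have e2 : u ++ [y k] = listOf y (k+1) := by rw [listOf_succ, e1]
        rwa [e2] at h
      have hi : k' < (e (listOf y (k+1))).length :=
        lt_of_lt_of_le (by simp [hk']) hpre.length_le
      calc et y k' = (e (listOf y (k+1))).getD k' false := branchMap_getD hestep y (k+1) hi
        _ = (e u ++ [y k]).getD k' false := getD_of_prefix false hpre (by simp [hk'])
        _ = y k := getD_append_self false (e u) (y k)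
    have hres := hpair (et x) (et y) k' (h1x.trans h1y.symm)
      (by rw [hvalx, hx]) (by rw [hvaly, hy])
    rw [h1x, hec u] at hres
    exact hres
  have hkey : ∀ x y : 𝒞, x ≠ y →
      (g (et x), g (et y)) ∈ K S c ∨ (g (et y), g (et x)) ∈ K S c := by
    intro x y hxy
    obtain ⟨k, hlk, hne⟩ := exists_first_diff hxy
    cases hxk : x k with
    | false =>
      have hyk : y k = true := by
        cases hyk : y k
        · exact absurd (hxk.trans hyk.symm) hne
        · rfl
      exact Or.inl (main x y k hlk hxk hyk)
    | true =>
      have hyk : y k = false := by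
        cases hyk : y k
        · rfl
        · exact absurd (hxk.trans hyk.symm) hne
      exact Or.inr (main y x k hlk.symm hyk hxk)
  have hgc : Continuous (fun x => g (et x)) :=
    (branchMap_continuous σ).comp (branchMap_continuous e)
  have hginj : Function.Injective (fun x => g (et x)) := by
    intro x y h
    by_contra hxy
    obtain ⟨k, hlk, hne⟩ := exists_first_diff hxy
    have h1 : et x ≠ et y := branchMap_ne hestep hlk hne
    obtain ⟨k2, hlk2, hne2⟩ := exists_first_diff h1
    exact branchMap_ne hstep hlk2 hne2 h
  set F : 𝒞 → 𝒞 := fun x => f (g (et x)) with hF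
  have hFc : Continuous F := hfc.comp hgc
  have hFinj : Function.Injective F := fun a b h => hginj (hfi h)
  obtain ⟨hQperf, hQne⟩ := perfect_range hFc hFinj
  refine ⟨range F, ?_, hQperf, hQne, ?_⟩
  · rintro w ⟨x, rfl⟩
    exact hfP (mem_range_self _)
  cases c with
  | true =>
    left
    rintro a ⟨w1, ⟨x, rfl⟩, rfl⟩ b ⟨w2, ⟨y, rfl⟩, rfl⟩ hab
    have hxy : x ≠ y := fun h => hab (by rw [h])
    rcases hkey x y hxy with h | h
    · simpa [K, hSdef, hη', hF] using h
    · exact hsym _ _ (by simpa [K, hSdef, hη', hF] using h)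
  | false =>
    right
    rintro a ⟨w1, ⟨x, rfl⟩, rfl⟩ b ⟨w2, ⟨y, rfl⟩, rfl⟩ hab hab'
    have hxy : x ≠ y := fun h => hab (by rw [h])
    rcases hkey x y hxy with h | h
    · have h' : (η (F x), η (F y)) ∉ R := by simpa [K, hSdef, hη', hF] using h
      exact h' hab'
    · have h' : (η (F y), η (F x)) ∉ R := by simpa [K, hSdef, hη', hF] using h
      exact h' (hsym _ _ hab')
end
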